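/- arXiv:2411.13043 — 2 statements merged into one kernel-verified Lean document; each statement's English description precedes it below -/
import Mathlib

section
/- Let k ≥ 1 and n ≥ 4k. Let A_i = {4i−3, 4i−2, 4i−1, 4i} for 1 ≤ i ≤ k. Then the number of involutions w of S_n for which there exist indices 1 ≤ i < j ≤ k with w(A_i) ∩ A_j ≠ ∅ is at most 16 · (k choose 2) · i_{n−2}, where i_m denotes the number of involutions in the symmetric group S_m. -/
/-- `invCount m` is the number of involutions in the symmetric group `S_m`
(permutations `w` with `w ∘ w = id`, including the identity). -/
def invCount (m : ℕ) : ℕ :=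
  (Finset.univ.filter fun w : Equiv.Perm (Fin m) => w * w = 1).card

open Finset Equiv

private lemma key_bound (n : ℕ) (a b : Fin n) (hab : a ≠ b) :
    (Finset.univ.filter fun w : Equiv.Perm (Fin n) => w * w = 1 ∧ w a = b).card
      ≤ invCount (n - 2) := by
  classical
  have hcard : Fintype.card {x : Fin n // x ≠ a ∧ x ≠ b} = n - 2 := by
    rw [Fintype.card_subtype]
    have h2 : Finset.univ.filter (fun x : Fin n => x ≠ a ∧ x ≠ b)
        = Finset.univ \ {a, b} := by
      ext x; simp [not_or]
    rw [h2, card_sdiff_of_subset (by simp), card_univ, Fintype.card_fin]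
    rw [card_insert_of_notMem (by simpa using hab), card_singleton]
  obtain ⟨e⟩ : Nonempty ({x : Fin n // x ≠ a ∧ x ≠ b} ≃ Fin (n - 2)) :=
    ⟨Fintype.equivFinOfCardEq hcard⟩
  have hp : ∀ w : Equiv.Perm (Fin n), (w * w = 1 ∧ w a = b) →
      ∀ x : Fin n, (x ≠ a ∧ x ≠ b) ↔ (w x ≠ a ∧ w x ≠ b) := by
    intro w h x
    have hinv : ∀ z, w (w z) = z := by
      intro z
      have := congrArg (fun σ : Equiv.Perm (Fin n) => σ z) h.1
      simpa [Equiv.Perm.mul_apply] using this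
    have hwb : w b = a := by rw [← h.2]; exact hinv a
    constructor
    · rintro ⟨hxa, hxb⟩
      exact ⟨fun hc => hxb (w.injective (hc.trans hwb.symm)),
             fun hc => hxa (w.injective (hc.trans h.2.symm))⟩
    · rintro ⟨h1, h2⟩
      exact ⟨fun hc => h2 (by rw [hc, h.2]), fun hc => h1 (by rw [hc, hwb])⟩
  set F : Equiv.Perm (Fin n) → Equiv.Perm (Fin (n - 2)) := fun w =>
    if h : w * w = 1 ∧ w a = b then e.permCongr (w.subtypePerm (fun x => (hp w h x).symm)) else 1 with hF
  apply Finset.card_le_card_of_injOn F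
  · intro w hw
    simp only [mem_coe, mem_filter, mem_univ, true_and] at hw
    show F w ∈ Finset.univ.filter fun σ : Equiv.Perm (Fin (n - 2)) => σ * σ = 1
    simp only [mem_filter, mem_univ, true_and]
    have hinv : ∀ z, w (w z) = z := by
      intro z
      have := congrArg (fun σ : Equiv.Perm (Fin n) => σ z) hw.1
      simpa [Equiv.Perm.mul_apply] using this
    have : e.permCongr (w.subtypePerm (fun x => (hp w hw x).symm)) * e.permCongr (w.subtypePerm (fun x => (hp w hw x).symm)) = 1 := by
      ext y
      simp [Equiv.permCongr_apply, Equiv.Perm.mul_apply, Equiv.Perm.subtypePerm_apply, hinv]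
    show F w * F w = 1
    simp only [hF]
    rw [dif_pos hw]
    exact this
  · intro w hw w' hw' hww
    simp only [mem_coe, mem_filter, mem_univ, true_and] at hw hw'
    simp only [hF, dif_pos hw, dif_pos hw'] at hww
    have hsub : w.subtypePerm (fun x => (hp w hw x).symm) = Equiv.Perm.subtypePerm w' (fun x => (hp w' hw' x).symm) :=
      (Equiv.injective _) hww
    have hinv : ∀ z, w (w z) = z := by
      intro z
      have := congrArg (fun σ : Equiv.Perm (Fin n) => σ z) hw.1
      simpa [Equiv.Perm.mul_apply] using this
    have hinv' : ∀ z, w' (w' z) = z := by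
      intro z
      have := congrArg (fun σ : Equiv.Perm (Fin n) => σ z) hw'.1
      simpa [Equiv.Perm.mul_apply] using this
    have hwb : w b = a := by rw [← hw.2]; exact hinv a
    have hwb' : w' b = a := by rw [← hw'.2]; exact hinv' a
    ext x
    by_cases hxa : x = a
    · rw [hxa, hw.2, hw'.2]
    by_cases hxb : x = b
    · rw [hxb, hwb, hwb']
    · have := congrArg (fun σ => (σ ⟨x, hxa, hxb⟩ : {x : Fin n // x ≠ a ∧ x ≠ b}).val) hsub
      exact congrArg Fin.val (by simpa [Equiv.Perm.subtypePerm_apply] using this)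

private lemma pairs_card (k : ℕ) :
    ((Finset.range k ×ˢ Finset.range k).filter fun p : ℕ × ℕ => p.1 < p.2).card
      = k.choose 2 := by
  have heq : ((Finset.range k ×ˢ Finset.range k).filter fun p : ℕ × ℕ => p.1 < p.2)
      = (Finset.range k).biUnion fun j => (Finset.range j).image fun i => (i, j) := by
    ext ⟨i, j⟩
    simp only [mem_filter, Finset.mem_product, Finset.mem_range, mem_biUnion, mem_image,
      Prod.mk.injEq]
    constructor
    · rintro ⟨⟨hi, hj⟩, hij⟩; exact ⟨j, hj, i, hij, rfl, rfl⟩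
    · rintro ⟨j', hj', i', hi', rfl, rfl⟩; omega
  rw [heq, card_biUnion]
  · have : ∀ j ∈ Finset.range k, ((Finset.range j).image fun i => (i, j)).card = j := by
      intro j _
      rw [Finset.card_image_of_injective _ (fun x y hxy => (Prod.mk.injEq _ _ _ _).mp hxy |>.1)]
      exact Finset.card_range j
    rw [Finset.sum_congr rfl this, Finset.sum_range_id, Nat.choose_two_right]
  · intro x _ y _ hxy
    simp only [Finset.disjoint_left, mem_image, Finset.mem_range]
    rintro p ⟨i, hi, rfl⟩ ⟨i', hi', h⟩
    exact hxy ((Prod.mk.injEq _ _ _ _).mp h).2.symm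

/-- For `k ≥ 1` and `n ≥ 4k`, with blocks `A_i = {4i-3,...,4i}` for
`1 ≤ i ≤ k` (0-based: `A_i = {4i, 4i+1, 4i+2, 4i+3}` for `0 ≤ i < k`), the number of
involutions `w` of `S_n` for which there exist `i < j` (both blocks) with
`w(A_i) ∩ A_j ≠ ∅` is at most `16 * (k choose 2) * i_{n-2}`. -/
theorem stmt4 (k n : ℕ) (hk : 1 ≤ k) (hn : 4 * k ≤ n) :
    (Finset.univ.filter fun w : Equiv.Perm (Fin n) =>
      w * w = 1 ∧ ∃ i < k, ∃ j < k, i < j ∧ ∃ a : Fin n,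
        a.val ∈ ({4 * i, 4 * i + 1, 4 * i + 2, 4 * i + 3} : Finset ℕ) ∧
        (w a).val ∈ ({4 * j, 4 * j + 1, 4 * j + 2, 4 * j + 3} : Finset ℕ)).card
    ≤ 16 * k.choose 2 * invCount (n - 2) := by
  classical
  set S : Finset ((ℕ × ℕ) × ℕ × ℕ) :=
    ((Finset.range k ×ˢ Finset.range k).filter fun p : ℕ × ℕ => p.1 < p.2) ×ˢ
      (Finset.range 4 ×ˢ Finset.range 4) with hS
  set T : (ℕ × ℕ) × ℕ × ℕ → Finset (Equiv.Perm (Fin n)) := fun q =>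
    Finset.univ.filter fun w => w * w = 1 ∧ ∃ a : Fin n,
      a.val = 4 * q.1.1 + q.2.1 ∧ (w a).val = 4 * q.1.2 + q.2.2 with hT
  have hsub : (Finset.univ.filter fun w : Equiv.Perm (Fin n) =>
      w * w = 1 ∧ ∃ i < k, ∃ j < k, i < j ∧ ∃ a : Fin n,
        a.val ∈ ({4 * i, 4 * i + 1, 4 * i + 2, 4 * i + 3} : Finset ℕ) ∧
        (w a).val ∈ ({4 * j, 4 * j + 1, 4 * j + 2, 4 * j + 3} : Finset ℕ))
      ⊆ S.biUnion T := by
    intro w hw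
    simp only [mem_filter, mem_univ, true_and] at hw
    obtain ⟨h1, i, hi, j, hj, hij, a, ha, hb⟩ := hw
    simp only [mem_insert, mem_singleton] at ha hb
    have hs : ∃ s < 4, a.val = 4 * i + s := by
      rcases ha with h | h | h | h
      exacts [⟨0, by omega, by omega⟩, ⟨1, by omega, by omega⟩,
        ⟨2, by omega, by omega⟩, ⟨3, by omega, by omega⟩]
    have ht : ∃ t < 4, (w a).val = 4 * j + t := by
      rcases hb with h | h | h | h
      exacts [⟨0, by omega, by omega⟩, ⟨1, by omega, by omega⟩,
        ⟨2, by omega, by omega⟩, ⟨3, by omega, by omega⟩]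
    obtain ⟨s, hs4, hsa⟩ := hs
    obtain ⟨t, ht4, hta⟩ := ht
    rw [mem_biUnion]
    refine ⟨((i, j), (s, t)), ?_, ?_⟩
    · simp only [hS, Finset.mem_product, mem_filter, Finset.mem_range]
      exact ⟨⟨⟨hi, hj⟩, hij⟩, hs4, ht4⟩
    · simp only [hT, mem_filter, mem_univ, true_and]
      exact ⟨h1, a, hsa, hta⟩
  have hbound : ∀ q ∈ S, (T q).card ≤ invCount (n - 2) := by
    rintro ⟨⟨i, j⟩, s, t⟩ hq
    simp only [hS, Finset.mem_product, mem_filter, Finset.mem_range] at hq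
    obtain ⟨⟨⟨hi, hj⟩, hij⟩, hs4, ht4⟩ := hq
    have han : 4 * i + s < n := by omega
    have hbn : 4 * j + t < n := by omega
    set a0 : Fin n := ⟨4 * i + s, han⟩
    set b0 : Fin n := ⟨4 * j + t, hbn⟩
    have hab : a0 ≠ b0 := by
      intro h
      have := Fin.val_eq_of_eq h
      simp only [a0, b0] at this
      omega
    have hTsub : T ((i, j), s, t) ⊆
        Finset.univ.filter fun w : Equiv.Perm (Fin n) => w * w = 1 ∧ w a0 = b0 := by
      intro w hw
      simp only [hT, mem_filter, mem_univ, true_and] at hw ⊢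
      obtain ⟨h1, a, ha, hb⟩ := hw
      have : a = a0 := Fin.ext ha
      subst this
      exact ⟨h1, Fin.ext hb⟩
    exact le_trans (Finset.card_le_card hTsub) (key_bound n a0 b0 hab)
  calc (Finset.univ.filter fun w : Equiv.Perm (Fin n) =>
      w * w = 1 ∧ ∃ i < k, ∃ j < k, i < j ∧ ∃ a : Fin n,
        a.val ∈ ({4 * i, 4 * i + 1, 4 * i + 2, 4 * i + 3} : Finset ℕ) ∧
        (w a).val ∈ ({4 * j, 4 * j + 1, 4 * j + 2, 4 * j + 3} : Finset ℕ)).card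
      ≤ (S.biUnion T).card := Finset.card_le_card hsub
    _ ≤ ∑ q ∈ S, (T q).card := Finset.card_biUnion_le
    _ ≤ ∑ _q ∈ S, invCount (n - 2) := Finset.sum_le_sum hbound
    _ = S.card * invCount (n - 2) := by rw [Finset.sum_const, smul_eq_mul]
    _ = 16 * k.choose 2 * invCount (n - 2) := by
        rw [hS, Finset.card_product, Finset.card_product, Finset.card_range, pairs_card]
        ring_nf
end

section
/- Let k ≥ 1 and n ≥ 4k. Let A_i = {4i−3, 4i−2, 4i−1, 4i} for 1 ≤ i ≤ k, and let Q_{n,k} be the set of involutions w of S_n such that w(A_i) ∩ A_j = ∅ for all 1 ≤ i < j ≤ k. Then the number of w ∈ Q_{n,k} such that for every i with 1 ≤ i ≤ k the inequality chain w(4i−2) < w(4i−3) < w(4i) < w(4i−1) fails, is at most (23/24)^k · |Q_{n,k}|. -/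
/-- `Qset n k` is the set of involutions `w` of `S_n` (permutations with `w ∘ w = id`)
such that `w(A_i) ∩ A_j = ∅` for all `1 ≤ i < j ≤ k`, where the blocks
`A_i = {4i-3,...,4i}` for `1 ≤ i ≤ k` are written 0-based as
`A_i = {4i, 4i+1, 4i+2, 4i+3}` for `0 ≤ i < k`. -/
def Qset (n k : ℕ) : Finset (Equiv.Perm (Fin n)) :=
  Finset.univ.filter fun w =>
    w * w = 1 ∧ ∀ j < k, ∀ i < j,
      ∀ a : Fin n, a.val ∈ ({4 * i, 4 * i + 1, 4 * i + 2, 4 * i + 3} : Finset ℕ) →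
        (w a).val ∉ ({4 * j, 4 * j + 1, 4 * j + 2, 4 * j + 3} : Finset ℕ)

open Finset Equiv

def inA (n i : ℕ) (x : Fin n) : Prop := 4*i ≤ x.val ∧ x.val < 4*i + 4

instance {n i : ℕ} {x : Fin n} : Decidable (inA n i x) := by unfold inA; infer_instance

lemma inA_iff_mem {n i : ℕ} (x : Fin n) :
    inA n i x ↔ x.val ∈ ({4 * i, 4 * i + 1, 4 * i + 2, 4 * i + 3} : Finset ℕ) := by
  simp [inA, Finset.mem_insert]; omega

lemma Qset_inv {n k : ℕ} {w : Equiv.Perm (Fin n)} (hw : w ∈ Qset n k) (x : Fin n) :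
    w (w x) = x := by
  have h : w * w = 1 := ((Finset.mem_filter.1 hw).2).1
  have := congrArg (fun σ : Equiv.Perm (Fin n) => σ x) h
  simpa using this

lemma Qset_block {n k : ℕ} {w : Equiv.Perm (Fin n)} (hw : w ∈ Qset n k)
    {i i' : ℕ} (hi : i < k) (hi' : i' < k) (hne : i ≠ i') {x : Fin n}
    (hx : inA n i x) : ¬ inA n i' (w x) := by
  have h := (Finset.mem_filter.1 hw).2.2
  rcases Nat.lt_or_ge i i' with hlt | hge
  · intro hc
    exact (h i' hi' i hlt x ((inA_iff_mem x).1 hx)) ((inA_iff_mem (w x)).1 hc)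
  · have hlt : i' < i := by omega
    intro hc
    have := h i hi i' hlt (w x) ((inA_iff_mem (w x)).1 hc)
    exact this (by rw [Qset_inv hw x]; exact (inA_iff_mem x).1 hx)

def dmap {n : ℕ} (j : ℕ) (w : Equiv.Perm (Fin n)) : Fin n → Option (Fin n) :=
  fun x => if inA n j x ∨ inA n j (w x) then none else some (w x)

def patt (n j : ℕ) (w : Equiv.Perm (Fin n)) : Prop :=
  ∃ h : 4*j+3 < n,
    w ⟨4*j+1, by omega⟩ < w ⟨4*j, by omega⟩ ∧
    w ⟨4*j, by omega⟩ < w ⟨4*j+3, h⟩ ∧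
    w ⟨4*j+3, h⟩ < w ⟨4*j+2, by omega⟩

def pj (n j : ℕ) (h : 4*j+3 < n) (r : Fin 4) : Fin n := ⟨4*j + r.val, by omega⟩

/-- index of a block-`j` element within the block (garbage outside the block). -/
def ridx {n : ℕ} (j : ℕ) (x : Fin n) : Fin 4 := ⟨min (x.val - 4*j) 3, by omega⟩

def Bset (n j : ℕ) (w0 : Equiv.Perm (Fin n)) : Finset (Fin n) :=
  Finset.univ.filter (fun x => ¬ inA n j x ∧ inA n j (w0 x))

lemma mem_Bset {n j : ℕ} {w0 : Equiv.Perm (Fin n)} {x : Fin n} :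
    x ∈ Bset n j w0 ↔ ¬ inA n j x ∧ inA n j (w0 x) := by
  simp [Bset]

lemma Bset_outside {n k j : ℕ} {w0 : Equiv.Perm (Fin n)} (hw0 : w0 ∈ Qset n k)
    (hjk : j < k) {b : Fin n} (hb : b ∈ Bset n j w0) {i : ℕ} (hik : i < k) :
    ¬ inA n i b := by
  rw [mem_Bset] at hb
  by_cases hij : i = j
  · subst hij; exact hb.1
  · intro hc
    exact Qset_block hw0 hik hjk hij hc hb.2

lemma Bset_card_le {n k j : ℕ} {w0 : Equiv.Perm (Fin n)} (hw0 : w0 ∈ Qset n k)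
    (h4 : 4*j+3 < n) : (Bset n j w0).card ≤ 4 := by
  have hsub : Bset n j w0 ⊆ Finset.image (fun r : Fin 4 => w0 (pj n j h4 r)) Finset.univ := by
    intro b hb
    rw [mem_Bset] at hb
    rcases hb with ⟨hb1, hb2⟩
    obtain ⟨hb3, hb4⟩ := hb2
    have hr : (w0 b).val - 4*j < 4 := by omega
    refine Finset.mem_image.2 ⟨⟨(w0 b).val - 4*j, hr⟩, Finset.mem_univ _, ?_⟩
    have : pj n j h4 ⟨(w0 b).val - 4*j, hr⟩ = w0 b := by
      apply Fin.ext; simp [pj]; omega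
    rw [this]
    -- w0 (w0 b) = b since w0 is an involution
    have hinv : w0 * w0 = 1 := ((Finset.mem_filter.1 hw0).2).1
    have := congrArg (fun σ : Equiv.Perm (Fin n) => σ b) hinv
    simpa using this
  calc (Bset n j w0).card ≤ _ := Finset.card_le_card hsub
    _ ≤ (Finset.univ : Finset (Fin 4)).card := Finset.card_image_le
    _ = 4 := by simp

section Generic

variable {n k j : ℕ} {w0 : Equiv.Perm (Fin n)}

/-- Generic construction: given a valid local assignment `g` (values at the four
block positions), produce an element of the same fiber with the pattern. -/
lemma exists_patt_of_assignment (hjk : j < k) (hw0 : w0 ∈ Qset n k) (h4 : 4*j+3 < n)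
    (g : Fin 4 → Fin n)
    (hpat : g 1 < g 0 ∧ g 0 < g 3 ∧ g 3 < g 2)
    (hmem : ∀ x, inA n j (g x) ∨ g x ∈ Bset n j w0)
    (hinv : ∀ x y : Fin 4, g x = pj n j h4 y → g y = pj n j h4 x)
    (hsurj : ∀ b ∈ Bset n j w0, ∃ x, g x = b)
    (hinj : Function.Injective g) :
    ∃ w' : Equiv.Perm (Fin n), w' ∈ Qset n k ∧ dmap j w' = dmap j w0 ∧ patt n j w' := by
  classical
  have w0inv : ∀ x, w0 (w0 x) = x := Qset_inv hw0
  set p : Fin 4 → Fin n := pj n j h4 with hp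
  have hpval : ∀ r : Fin 4, (p r).val = 4*j + r.val := fun r => rfl
  have hpinA : ∀ r, inA n j (p r) := by
    intro r
    have := r.isLt
    exact ⟨by rw [hpval]; omega, by rw [hpval]; omega⟩
  have hAp : ∀ x : Fin n, inA n j x → x = p (ridx j x) := by
    intro x hx
    obtain ⟨h1, h2⟩ := hx
    apply Fin.ext; rw [hpval]; simp [ridx]; omega
  -- the new function
  set f : Fin n → Fin n := fun x =>
    if inA n j x then g (ridx j x)
    else if h2 : ∃ r, g r = x then p h2.choose
    else w0 x with hf
  have hridxp : ∀ r : Fin 4, ridx j (p r) = r := by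
    intro r
    have := r.isLt
    apply Fin.ext; simp [ridx, hpval]; omega
  have hfp : ∀ r : Fin 4, f (p r) = g r := by
    intro r
    have : inA n j (p r) := hpinA r
    simp only [hf]
    rw [if_pos this, hridxp]
  have hfg : ∀ r : Fin 4, ¬ inA n j (g r) → f (g r) = p r := by
    intro r hr
    simp only [hf]
    rw [if_neg hr, dif_pos ⟨r, rfl⟩]
    congr 1
    exact hinj (Exists.choose_spec (⟨r, rfl⟩ : ∃ r', g r' = g r))
  have hfo : ∀ x : Fin n, ¬ inA n j x → x ∉ Bset n j w0 → f x = w0 x := by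
    intro x hx hxB
    simp only [hf]
    rw [if_neg hx, dif_neg]
    rintro ⟨r, hr⟩
    rcases hmem r with hm | hm
    · rw [hr] at hm; exact hx hm
    · rw [hr] at hm; exact hxB hm
  have hinvol : Function.Involutive f := by
    intro x
    by_cases hx : inA n j x
    · -- x = p r
      have hxp : x = p (ridx j x) := hAp x hx
      set r : Fin 4 := ridx j x
      have h1 : f x = g r := by rw [hxp, hfp]
      rw [h1]
      by_cases hg : inA n j (g r)
      · have hgp : g r = p (ridx j (g r)) := hAp _ hg
        set s : Fin 4 := ridx j (g r)
        rw [hgp, hfp]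
        rw [hinv r s hgp, ← hxp]
      · rw [hfg r hg, ← hxp]
    · by_cases hxB : x ∈ Bset n j w0
      · obtain ⟨r, hr⟩ := hsurj x hxB
        have hgr : ¬ inA n j (g r) := by rw [hr]; exact hx
        rw [← hr, hfg r hgr, hfp, hr]
      · rw [hfo x hx hxB]
        have h1 : ¬ inA n j (w0 x) := by
          intro hc
          exact hxB (mem_Bset.2 ⟨hx, hc⟩)
        have h2 : w0 x ∉ Bset n j w0 := by
          intro hc
          have := (mem_Bset.1 hc).2
          rw [w0inv] at this
          exact hx this
        rw [hfo _ h1 h2, w0inv]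
  set w' : Equiv.Perm (Fin n) := Function.Involutive.toPerm f hinvol with hw'
  have hw'app : ∀ x, w' x = f x := fun x => rfl
  -- w' ∈ Qset
  have hQ : w' ∈ Qset n k := by
    rw [Qset, Finset.mem_filter]
    refine ⟨Finset.mem_univ _, ?_, ?_⟩
    · ext x; simp [hw'app, hinvol x]
    · intro j' hj' i hij a ha hc
      rw [← inA_iff_mem] at ha hc
      rw [hw'app] at hc
      by_cases hijj : i = j
      · -- a is a block-j position, f a = g r ∈ A_j ∪ B
        have haj : inA n j a := hijj ▸ ha
        have ha' : a = p (ridx j a) := hAp a haj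
        set r : Fin 4 := ridx j a
        rw [ha', hfp] at hc
        rcases hmem r with hm | hm
        · -- inA j (g r) and inA j' (g r) with j ≠ j'
          have : j = j' := by
            rcases hm with ⟨hm1, hm2⟩; rcases hc with ⟨hc1, hc2⟩; omega
          omega
        · exact Bset_outside hw0 hjk hm hj' hc
      · -- a in another block; f a = w0 a
        have hik : i < k := by omega
        have h1 : ¬ inA n j a := by
          intro hc2
          rcases ha with ⟨ha1, ha2⟩; rcases hc2 with ⟨hb1, hb2⟩
          exact hijj (by omega)
        have h2 : a ∉ Bset n j w0 := fun hb => Bset_outside hw0 hjk hb hik ha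
        rw [hfo a h1 h2] at hc
        by_cases hj'j : j' = j
        · subst hj'j
          exact Qset_block hw0 hik hjk hijj ha hc
        · exact Qset_block hw0 hik hj' (by omega) ha hc
  -- dmap equality
  have hD : dmap j w' = dmap j w0 := by
    funext x
    by_cases hx : inA n j x
    · simp [dmap, hx]
    · by_cases hxB : x ∈ Bset n j w0
      · obtain ⟨r, hr⟩ := hsurj x hxB
        have hgr : ¬ inA n j (g r) := by rw [hr]; exact hx
        have h1 : w' x = p r := by rw [hw'app, ← hr, hfg r hgr]
        have h2 : inA n j (w' x) := by rw [h1]; exact hpinA r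
        have h3 : inA n j (w0 x) := (mem_Bset.1 hxB).2
        simp [dmap, hx, h2, h3]
      · have h1 : w' x = w0 x := by rw [hw'app, hfo x hx hxB]
        simp [dmap, hx, h1]
  -- pattern
  refine ⟨w', hQ, hD, h4, ?_, ?_, ?_⟩
  · have e1 : (⟨4*j+1, by omega⟩ : Fin n) = p 1 := by apply Fin.ext; rw [hpval]; rfl
    have e0 : (⟨4*j, by omega⟩ : Fin n) = p 0 := by apply Fin.ext; rw [hpval]; rfl
    rw [e1, e0, hw'app, hw'app, hfp, hfp]; exact hpat.1
  · have e0 : (⟨4*j, by omega⟩ : Fin n) = p 0 := by apply Fin.ext; rw [hpval]; rfl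
    have e3 : (⟨4*j+3, by omega⟩ : Fin n) = p 3 := by apply Fin.ext; rw [hpval]; rfl
    rw [e0, e3, hw'app, hw'app, hfp, hfp]; exact hpat.2.1
  · have e3 : (⟨4*j+3, by omega⟩ : Fin n) = p 3 := by apply Fin.ext; rw [hpval]; rfl
    have e2 : (⟨4*j+2, by omega⟩ : Fin n) = p 2 := by apply Fin.ext; rw [hpval]; rfl
    rw [e3, e2, hw'app, hw'app, hfp, hfp]; exact hpat.2.2

end Generic
lemma sorted_access {α : Type*} [LinearOrder α] (S : Finset α) {c : ℕ} (hc : S.card = c) :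
    ∃ e : Fin c → α, StrictMono e ∧ (∀ i, e i ∈ S) ∧ ∀ b ∈ S, ∃ i, e i = b := by
  refine ⟨fun i => (S.orderIsoOfFin hc i : α), ?_, ?_, ?_⟩
  · intro i i' hii
    exact (S.orderIsoOfFin hc).strictMono hii
  · intro i; exact (S.orderIsoOfFin hc i).2
  · intro b hb
    exact ⟨(S.orderIsoOfFin hc).symm ⟨b, hb⟩, by simp⟩

lemma inj_of_chain {n : ℕ} {g : Fin 4 → Fin n} (h1 : g 1 < g 0) (h2 : g 0 < g 3)
    (h3 : g 3 < g 2) : Function.Injective g := by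
  rw [Fin.lt_def] at h1 h2 h3
  intro x y hxy
  have hv : (g x).val = (g y).val := congrArg Fin.val hxy
  fin_cases x <;> fin_cases y <;> first | rfl | (exfalso; simp only [show (⟨0, by omega⟩ : Fin 4) = 0 from rfl,
      show (⟨1, by omega⟩ : Fin 4) = 1 from rfl, show (⟨2, by omega⟩ : Fin 4) = 2 from rfl,
      show (⟨3, by omega⟩ : Fin 4) = 3 from rfl] at hv; omega)
/-- local model predicate for fiber elements, `m` = number of outside partners. -/
def locP (m : ℕ) (g : Fin 4 → Fin 8) : Prop :=
  (∀ x, (g x).val < 4 + m) ∧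
  (∀ x y, g x = g y → x = y) ∧
  (∀ x : Fin 4, ∀ h : (g x).val < 4, (g ⟨(g x).val, h⟩).val = x.val) ∧
  (∀ r : Fin 4, r.val < m → ∃ x, (g x).val = 4 + r.val)

instance (m : ℕ) (g : Fin 4 → Fin 8) : Decidable (locP m g) := by
  unfold locP; infer_instance

set_option maxRecDepth 100000 in
set_option maxHeartbeats 4000000 in
lemma locP_card {m : ℕ} (hm : m ≤ 4) :
    (Finset.univ.filter (locP m)).card ≤ 24 := by
  interval_cases m <;> decide
lemma inA_eq_p {n j : ℕ} (h4 : 4*j+3 < n) {x : Fin n} (hx : inA n j x) :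
    x = pj n j h4 (ridx j x) := by
  obtain ⟨h1, h2⟩ := hx
  apply Fin.ext
  show x.val = 4*j + min (x.val - 4*j) 3
  omega

lemma fiber_inA_iff {n k j : ℕ} {w0 w : Equiv.Perm (Fin n)}
    (hw : w ∈ Qset n k) (hd : dmap j w = dmap j w0) {x : Fin n} (hx : ¬ inA n j x) :
    inA n j (w x) ↔ x ∈ Bset n j w0 := by
  have hdx := congrFun hd x
  constructor
  · intro h
    have : dmap j w x = none := by simp [dmap, hx, h]
    rw [this] at hdx
    by_cases h0 : inA n j (w0 x)
    · exact mem_Bset.2 ⟨hx, h0⟩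
    · exfalso
      have : dmap j w0 x = some (w0 x) := by simp [dmap, hx, h0]
      rw [this] at hdx
      exact nomatch hdx
  · intro h
    have h0 : inA n j (w0 x) := (mem_Bset.1 h).2
    have : dmap j w0 x = none := by simp [dmap, hx, h0]
    rw [this] at hdx
    by_contra hc
    have : dmap j w x = some (w x) := by simp [dmap, hx, hc]
    rw [this] at hdx
    exact nomatch hdx

lemma fiber_agree {n j : ℕ} {w0 w : Equiv.Perm (Fin n)}
    (hd : dmap j w = dmap j w0) {x : Fin n} (hx : ¬ inA n j x)
    (hwx : ¬ inA n j (w0 x)) : w x = w0 x := by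
  have hdx := congrFun hd x
  have h0 : dmap j w0 x = some (w0 x) := by simp [dmap, hx, hwx]
  rw [h0] at hdx
  by_cases hc : inA n j (w x)
  · exfalso
    have : dmap j w x = none := by simp [dmap, hx, hc]
    rw [this] at hdx
    exact nomatch hdx
  · have : dmap j w x = some (w x) := by simp [dmap, hx, hc]
    rw [this] at hdx
    exact Option.some_injective _ hdx

lemma fiber_card_le {n k j : ℕ} {w0 : Equiv.Perm (Fin n)} (hjk : j < k) (hn : 4*k ≤ n)
    (hw0 : w0 ∈ Qset n k) :
    ((Qset n k).filter (fun w => dmap j w = dmap j w0)).card ≤ 24 := by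
  classical
  have h4 : 4*j+3 < n := by omega
  set p := pj n j h4 with hpdef
  have hpv : ∀ y : Fin 4, (p y).val = 4*j + y.val := fun _ => rfl
  have hpinA : ∀ y : Fin 4, inA n j (p y) := by
    intro y
    have := y.isLt
    exact ⟨by rw [hpv]; omega, by rw [hpv]; omega⟩
  set B := Bset n j w0 with hBdef
  set m := B.card with hmdef
  have hm : m ≤ 4 := Bset_card_le hw0 h4
  set iso := B.orderIsoOfFin (rfl : B.card = m) with hiso
  -- encoding map
  set Φ : Equiv.Perm (Fin n) → (Fin 4 → Fin 8) := fun w x =>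
    if _ : inA n j (w (p x)) then ⟨(w (p x)).val - 4*j, by
        have h1 := (‹inA n j (w (p x))› : inA n j (w (p x))).1
        have h2 := (‹inA n j (w (p x))› : inA n j (w (p x))).2
        omega⟩
    else if h2 : w (p x) ∈ B then ⟨4 + (iso.symm ⟨w (p x), h2⟩).val, by
        have := (iso.symm ⟨w (p x), h2⟩).isLt
        omega⟩
    else 0 with hΦdef
  have key : ∀ w ∈ (Qset n k).filter (fun w => dmap j w = dmap j w0),
      ∀ x : Fin 4, (inA n j (w (p x)) ∧ (Φ w x).val = (w (p x)).val - 4*j ∧ (Φ w x).val < 4)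
        ∨ (∃ h2 : w (p x) ∈ B, (Φ w x).val = 4 + (iso.symm ⟨w (p x), h2⟩).val) := by
    intro w hw x
    rw [Finset.mem_filter] at hw
    by_cases h1 : inA n j (w (p x))
    · left
      refine ⟨h1, ?_, ?_⟩
      · simp [hΦdef, h1]
      · simp [hΦdef, h1]
        have := h1.1; have := h1.2; omega
    · right
      have hB : w (p x) ∈ B := (fiber_inA_iff hw.1 hw.2 h1).mp
        (by rw [Qset_inv hw.1]; exact hpinA x)
      refine ⟨hB, ?_⟩
      simp [hΦdef, h1, hB]
  -- apply injectivity
  have hinj : ∀ w1 ∈ (Qset n k).filter (fun w => dmap j w = dmap j w0),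
      ∀ w2 ∈ (Qset n k).filter (fun w => dmap j w = dmap j w0),
      Φ w1 = Φ w2 → w1 = w2 := by
    intro w1 hw1 w2 hw2 hf
    have hq1 := (Finset.mem_filter.1 hw1).1
    have hq2 := (Finset.mem_filter.1 hw2).1
    have hd1 := (Finset.mem_filter.1 hw1).2
    have hd2 := (Finset.mem_filter.1 hw2).2
    have step1 : ∀ x : Fin 4, w1 (p x) = w2 (p x) := by
      intro x
      have hfx : (Φ w1 x).val = (Φ w2 x).val := by rw [hf]
      rcases key w1 hw1 x with ⟨ha1, hb1, hc1⟩ | ⟨ha1, hb1⟩ <;>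
        rcases key w2 hw2 x with ⟨ha2, hb2, hc2⟩ | ⟨ha2, hb2⟩
      · apply Fin.ext
        have i11 := ha1.1; have i12 := ha1.2; have i21 := ha2.1; have i22 := ha2.2
        omega
      · exfalso
        have := (iso.symm ⟨w2 (p x), ha2⟩).isLt
        omega
      · exfalso
        have := (iso.symm ⟨w1 (p x), ha1⟩).isLt
        omega
      · have : iso.symm ⟨w1 (p x), ha1⟩ = iso.symm ⟨w2 (p x), ha2⟩ := by
          apply Fin.ext; omega
        have h2 := iso.symm.injective this
        exact congrArg Subtype.val h2
    apply Equiv.ext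
    intro x
    by_cases hx : inA n j x
    · have := step1 (ridx j x)
      rw [hpdef] at this
      rwa [← inA_eq_p h4 hx] at this
    · by_cases hxB : x ∈ B
      · have h1 : inA n j (w1 x) := (fiber_inA_iff hq1 hd1 hx).mpr hxB
        have hr : w1 x = p (ridx j (w1 x)) := inA_eq_p h4 h1
        set r := ridx j (w1 x)
        have e1 : w1 (p r) = x := by rw [← hr, Qset_inv hq1]
        have e2 : w2 (p r) = x := by rw [← step1 r]; exact e1
        have t1 : w1 x = p r := by
          conv_lhs => rw [← e1]
          exact Qset_inv hq1 _
        have t2 : w2 x = p r := by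
          conv_lhs => rw [← e2]
          exact Qset_inv hq2 _
        rw [t1, t2]
      · have hB1 : ¬ inA n j (w0 x) := by
          intro hc
          exact hxB (mem_Bset.2 ⟨hx, hc⟩)
        rw [fiber_agree hd1 hx hB1, fiber_agree hd2 hx hB1]
  have hmaps : ∀ w ∈ (Qset n k).filter (fun w => dmap j w = dmap j w0),
      Φ w ∈ Finset.univ.filter (locP m) := by
    intro w hw
    have hq := (Finset.mem_filter.1 hw).1
    have hd := (Finset.mem_filter.1 hw).2
    rw [Finset.mem_filter]
    refine ⟨Finset.mem_univ _, ?_, ?_, ?_, ?_⟩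
    · -- bound
      intro x
      rcases key w hw x with ⟨_, _, hc⟩ | ⟨hb, hval⟩
      · omega
      · have := (iso.symm ⟨w (p x), hb⟩).isLt
        omega
    · -- injectivity of the code
      intro x y hxy
      have hv : (Φ w x).val = (Φ w y).val := by rw [hxy]
      have hwpxy : w (p x) = w (p y) → x = y := by
        intro h
        have := w.injective h
        have hx := congrArg Fin.val this
        rw [hpv, hpv] at hx
        exact Fin.ext (by omega)
      rcases key w hw x with ⟨ha1, hb1, hc1⟩ | ⟨ha1, hb1⟩ <;>
        rcases key w hw y with ⟨ha2, hb2, hc2⟩ | ⟨ha2, hb2⟩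
      · apply hwpxy
        apply Fin.ext
        have i11 := ha1.1; have i12 := ha1.2; have i21 := ha2.1; have i22 := ha2.2
        omega
      · exfalso
        have := (iso.symm ⟨w (p y), ha2⟩).isLt
        omega
      · exfalso
        have := (iso.symm ⟨w (p x), ha1⟩).isLt
        omega
      · apply hwpxy
        have : iso.symm ⟨w (p x), ha1⟩ = iso.symm ⟨w (p y), ha2⟩ := by
          apply Fin.ext; omega
        have h2 := iso.symm.injective this
        exact congrArg Subtype.val h2
    · -- internal involution
      intro x h
      rcases key w hw x with ⟨ha, hb, hc⟩ | ⟨ha, hb⟩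
      · have hs : p ⟨(Φ w x).val, h⟩ = w (p x) := by
          apply Fin.ext
          rw [hpv]
          have i1 := ha.1; have i2 := ha.2
          simp only [hb]
          omega
        rcases key w hw ⟨(Φ w x).val, h⟩ with ⟨ha2, hb2, hc2⟩ | ⟨ha2, hb2⟩
        · rw [hb2, hs, Qset_inv hq, hpv]
          omega
        · exfalso
          rw [hs, Qset_inv hq] at ha2
          have := (mem_Bset.1 (hBdef ▸ ha2)).1
          exact this (hpinA x)
      · exfalso
        have := (iso.symm ⟨w (p x), ha⟩).isLt
        omega
    · -- surjectivity onto externals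
      intro r hr
      set b : Fin n := (iso ⟨r.val, by omega⟩ : Fin n) with hbdef
      have hbB : b ∈ B := (iso ⟨r.val, by omega⟩).2
      have hnb : ¬ inA n j b := (mem_Bset.1 (hBdef ▸ hbB)).1
      have h1 : inA n j (w b) := (fiber_inA_iff hq hd hnb).mpr hbB
      have hrw : w b = p (ridx j (w b)) := inA_eq_p h4 h1
      refine ⟨ridx j (w b), ?_⟩
      have e1 : w (p (ridx j (w b))) = b := by rw [← hrw, Qset_inv hq]
      rcases key w hw (ridx j (w b)) with ⟨ha, hb', hc⟩ | ⟨ha, hb'⟩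
      · exfalso
        rw [e1] at ha
        exact hnb ha
      · rw [hb']
        have hsub : (⟨w (p (ridx j (w b))), ha⟩ : {x // x ∈ B}) = ⟨b, hbB⟩ := by
          simp [e1]
        have h5 : (iso.symm ⟨w (p (ridx j (w b))), ha⟩).val = (iso.symm ⟨b, hbB⟩).val := by
          rw [hsub]
        have h6 : (⟨b, hbB⟩ : {x // x ∈ B}) = iso ⟨r.val, by omega⟩ :=
          Subtype.ext hbdef
        rw [h5, h6]
        simp
  calc ((Qset n k).filter (fun w => dmap j w = dmap j w0)).card
      ≤ (Finset.univ.filter (locP m)).card := Finset.card_le_card_of_injOn Φ hmaps hinj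
    _ ≤ 24 := locP_card hm
lemma exists_patt_fiber {n k j : ℕ} {w0 : Equiv.Perm (Fin n)} (hjk : j < k) (hn : 4*k ≤ n)
    (hw0 : w0 ∈ Qset n k) :
    ∃ w', w' ∈ Qset n k ∧ dmap j w' = dmap j w0 ∧ patt n j w' := by
  classical
  have h4 : 4*j+3 < n := by omega
  set p := pj n j h4 with hpdef
  have hpv : ∀ y : Fin 4, (p y).val = 4*j + y.val := fun _ => rfl
  have c0 : ((0 : Fin 4) : ℕ) = 0 := rfl
  have c1 : ((1 : Fin 4) : ℕ) = 1 := rfl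
  have c2 : ((2 : Fin 4) : ℕ) = 2 := rfl
  have c3 : ((3 : Fin 4) : ℕ) = 3 := rfl
  have P0 : (p 0).val = 4*j + 0 := rfl
  have P1 : (p 1).val = 4*j + 1 := rfl
  have P2 : (p 2).val = 4*j + 2 := rfl
  have P3 : (p 3).val = 4*j + 3 := rfl
  have hpinA : ∀ y : Fin 4, inA n j (p y) := by
    intro y
    have := y.isLt
    exact ⟨by rw [hpv]; omega, by rw [hpv]; omega⟩
  set B := Bset n j w0 with hBdef
  set L := B.filter (fun x => x.val < 4*j) with hLdef
  set H := B.filter (fun x => ¬ x.val < 4*j) with hHdef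
  have hBcard : B.card ≤ 4 := Bset_card_le hw0 h4
  have hLH : L.card + H.card = B.card :=
    Finset.card_filter_add_card_filter_not (fun x : Fin n => x.val < 4*j)
  have hLmem : ∀ b ∈ L, b ∈ B ∧ b.val < 4*j := by
    intro b hb
    exact ⟨(Finset.mem_filter.1 hb).1, (Finset.mem_filter.1 hb).2⟩
  have hHmem : ∀ b ∈ H, b ∈ B ∧ 4*j+4 ≤ b.val := by
    intro b hb
    have h1 := (Finset.mem_filter.1 hb).1
    have h2 := (Finset.mem_filter.1 hb).2
    have h3 := (mem_Bset.1 h1).1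
    simp only [inA, not_and, not_lt] at h3
    refine ⟨h1, ?_⟩
    simp only [not_lt] at h2
    omega
  have hsplit : ∀ b ∈ B, b ∈ L ∨ b ∈ H := by
    intro b hb
    by_cases hc : b.val < 4*j
    · exact Or.inl (Finset.mem_filter.2 ⟨hb, hc⟩)
    · exact Or.inr (Finset.mem_filter.2 ⟨hb, hc⟩)
  obtain ⟨l, hl⟩ : ∃ l, L.card = l := ⟨_, rfl⟩
  obtain ⟨h, hh⟩ : ∃ h, H.card = h := ⟨_, rfl⟩
  have hlh4 : l + h ≤ 4 := by omega
  have hl4 : l ≤ 4 := by omega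
  have hh4 : h ≤ 4 := by omega
  obtain ⟨lo, lom, lomem, losurj⟩ := sorted_access L hl
  obtain ⟨hi, him, himem, hisurj⟩ := sorted_access H hh
  have hloB : ∀ i, lo i ∈ B ∧ (lo i).val < 4*j := fun i => hLmem _ (lomem i)
  have hhiB : ∀ i, hi i ∈ B ∧ 4*j+4 ≤ (hi i).val := fun i => hHmem _ (himem i)
  interval_cases l
  · -- l = 0
    interval_cases h
    · -- case l=0, h=0
      set g : Fin 4 → Fin n := ![p 1, p 0, p 3, p 2] with hgdef
      have hg0 : g 0 = p 1 := rfl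
      have hg1 : g 1 = p 0 := rfl
      have hg2 : g 2 = p 3 := rfl
      have hg3 : g 3 = p 2 := rfl
      have hpat : g 1 < g 0 ∧ g 0 < g 3 ∧ g 3 < g 2 := by
        refine ⟨?_, ?_, ?_⟩ <;> simp only [hg0, hg1, hg2, hg3, Fin.lt_def] <;> omega
      have hmem : ∀ x, inA n j (g x) ∨ g x ∈ B := by
        intro x; fin_cases x
        · exact Or.inl (show inA n j (g 0) by rw [hg0]; exact hpinA 1)
        · exact Or.inl (show inA n j (g 1) by rw [hg1]; exact hpinA 0)
        · exact Or.inl (show inA n j (g 2) by rw [hg2]; exact hpinA 3)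
        · exact Or.inl (show inA n j (g 3) by rw [hg3]; exact hpinA 2)
      have hinv : ∀ x y, g x = p y → g y = p x := by
        intro x y hxy
        fin_cases x
        · have hxy' : g (0 : Fin 4) = p y := hxy
          rw [hg0] at hxy'
          have hv := congrArg Fin.val hxy'
          have h1 := hpv y
          have hy : y = 1 := by
            apply Fin.ext
            omega
          subst hy
          show g 1 = p (0 : Fin 4)
          exact hg1
        · have hxy' : g (1 : Fin 4) = p y := hxy
          rw [hg1] at hxy'
          have hv := congrArg Fin.val hxy'
          have h1 := hpv y
          have hy : y = 0 := by
            apply Fin.ext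
            omega
          subst hy
          show g 0 = p (1 : Fin 4)
          exact hg0
        · have hxy' : g (2 : Fin 4) = p y := hxy
          rw [hg2] at hxy'
          have hv := congrArg Fin.val hxy'
          have h1 := hpv y
          have hy : y = 3 := by
            apply Fin.ext
            omega
          subst hy
          show g 3 = p (2 : Fin 4)
          exact hg3
        · have hxy' : g (3 : Fin 4) = p y := hxy
          rw [hg3] at hxy'
          have hv := congrArg Fin.val hxy'
          have h1 := hpv y
          have hy : y = 2 := by
            apply Fin.ext
            omega
          subst hy
          show g 2 = p (3 : Fin 4)
          exact hg2
      have hsurj : ∀ b ∈ B, ∃ x, g x = b := by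
        intro b hb
        rcases hsplit b hb with hbl | hbh
        · obtain ⟨i, hib⟩ := losurj b hbl
          exact i.elim0
        · obtain ⟨i, hib⟩ := hisurj b hbh
          exact i.elim0
      exact exists_patt_of_assignment hjk hw0 h4 g hpat hmem hinv hsurj (inj_of_chain hpat.1 hpat.2.1 hpat.2.2)
    · -- case l=0, h=1
      have W0 : 4*j+4 ≤ (hi 0).val := (hhiB 0).2
      set g : Fin 4 → Fin n := ![p 1, p 0, hi 0, p 3] with hgdef
      have hg0 : g 0 = p 1 := rfl
      have hg1 : g 1 = p 0 := rfl
      have hg2 : g 2 = hi 0 := rfl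
      have hg3 : g 3 = p 3 := rfl
      have hpat : g 1 < g 0 ∧ g 0 < g 3 ∧ g 3 < g 2 := by
        refine ⟨?_, ?_, ?_⟩ <;> simp only [hg0, hg1, hg2, hg3, Fin.lt_def] <;> omega
      have hmem : ∀ x, inA n j (g x) ∨ g x ∈ B := by
        intro x; fin_cases x
        · exact Or.inl (show inA n j (g 0) by rw [hg0]; exact hpinA 1)
        · exact Or.inl (show inA n j (g 1) by rw [hg1]; exact hpinA 0)
        · exact Or.inr (show g 2 ∈ B by rw [hg2]; exact (hhiB 0).1)
        · exact Or.inl (show inA n j (g 3) by rw [hg3]; exact hpinA 3)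
      have hinv : ∀ x y, g x = p y → g y = p x := by
        intro x y hxy
        fin_cases x
        · have hxy' : g (0 : Fin 4) = p y := hxy
          rw [hg0] at hxy'
          have hv := congrArg Fin.val hxy'
          have h1 := hpv y
          have hy : y = 1 := by
            apply Fin.ext
            omega
          subst hy
          show g 1 = p (0 : Fin 4)
          exact hg1
        · have hxy' : g (1 : Fin 4) = p y := hxy
          rw [hg1] at hxy'
          have hv := congrArg Fin.val hxy'
          have h1 := hpv y
          have hy : y = 0 := by
            apply Fin.ext
            omega
          subst hy
          show g 0 = p (1 : Fin 4)
          exact hg0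
        · have hxy' : g (2 : Fin 4) = p y := hxy
          rw [hg2] at hxy'
          have hv := congrArg Fin.val hxy'
          have h1 := hpv y
          exfalso
          have h2 := y.isLt
          omega
        · have hxy' : g (3 : Fin 4) = p y := hxy
          rw [hg3] at hxy'
          have hv := congrArg Fin.val hxy'
          have h1 := hpv y
          have hy : y = 3 := by
            apply Fin.ext
            omega
          subst hy
          show g 3 = p (3 : Fin 4)
          exact hg3
      have hsurj : ∀ b ∈ B, ∃ x, g x = b := by
        intro b hb
        rcases hsplit b hb with hbl | hbh
        · obtain ⟨i, hib⟩ := losurj b hbl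
          exact i.elim0
        · obtain ⟨i, hib⟩ := hisurj b hbh
          rcases i with ⟨iv, hiv⟩
          interval_cases iv
          · exact ⟨2, by rw [hg2]; exact hib⟩
      exact exists_patt_of_assignment hjk hw0 h4 g hpat hmem hinv hsurj (inj_of_chain hpat.1 hpat.2.1 hpat.2.2)
    · -- case l=0, h=2
      have W0 : 4*j+4 ≤ (hi 0).val := (hhiB 0).2
      have W1 : 4*j+4 ≤ (hi 1).val := (hhiB 1).2
      have HM0 : (hi 0).val < (hi 1).val := by
        have := him (show (0 : Fin 2) < 1 by decide)
        rwa [Fin.lt_def] at this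
      set g : Fin 4 → Fin n := ![p 1, p 0, hi 1, hi 0] with hgdef
      have hg0 : g 0 = p 1 := rfl
      have hg1 : g 1 = p 0 := rfl
      have hg2 : g 2 = hi 1 := rfl
      have hg3 : g 3 = hi 0 := rfl
      have hpat : g 1 < g 0 ∧ g 0 < g 3 ∧ g 3 < g 2 := by
        refine ⟨?_, ?_, ?_⟩ <;> simp only [hg0, hg1, hg2, hg3, Fin.lt_def] <;> omega
      have hmem : ∀ x, inA n j (g x) ∨ g x ∈ B := by
        intro x; fin_cases x
        · exact Or.inl (show inA n j (g 0) by rw [hg0]; exact hpinA 1)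
        · exact Or.inl (show inA n j (g 1) by rw [hg1]; exact hpinA 0)
        · exact Or.inr (show g 2 ∈ B by rw [hg2]; exact (hhiB 1).1)
        · exact Or.inr (show g 3 ∈ B by rw [hg3]; exact (hhiB 0).1)
      have hinv : ∀ x y, g x = p y → g y = p x := by
        intro x y hxy
        fin_cases x
        · have hxy' : g (0 : Fin 4) = p y := hxy
          rw [hg0] at hxy'
          have hv := congrArg Fin.val hxy'
          have h1 := hpv y
          have hy : y = 1 := by
            apply Fin.ext
            omega
          subst hy
          show g 1 = p (0 : Fin 4)
          exact hg1
        · have hxy' : g (1 : Fin 4) = p y := hxy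
          rw [hg1] at hxy'
          have hv := congrArg Fin.val hxy'
          have h1 := hpv y
          have hy : y = 0 := by
            apply Fin.ext
            omega
          subst hy
          show g 0 = p (1 : Fin 4)
          exact hg0
        · have hxy' : g (2 : Fin 4) = p y := hxy
          rw [hg2] at hxy'
          have hv := congrArg Fin.val hxy'
          have h1 := hpv y
          exfalso
          have h2 := y.isLt
          omega
        · have hxy' : g (3 : Fin 4) = p y := hxy
          rw [hg3] at hxy'
          have hv := congrArg Fin.val hxy'
          have h1 := hpv y
          exfalso
          have h2 := y.isLt
          omega
      have hsurj : ∀ b ∈ B, ∃ x, g x = b := by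
        intro b hb
        rcases hsplit b hb with hbl | hbh
        · obtain ⟨i, hib⟩ := losurj b hbl
          exact i.elim0
        · obtain ⟨i, hib⟩ := hisurj b hbh
          rcases i with ⟨iv, hiv⟩
          interval_cases iv
          · exact ⟨3, by rw [hg3]; exact hib⟩
          · exact ⟨2, by rw [hg2]; exact hib⟩
      exact exists_patt_of_assignment hjk hw0 h4 g hpat hmem hinv hsurj (inj_of_chain hpat.1 hpat.2.1 hpat.2.2)
    · -- case l=0, h=3
      have W0 : 4*j+4 ≤ (hi 0).val := (hhiB 0).2
      have W1 : 4*j+4 ≤ (hi 1).val := (hhiB 1).2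
      have W2 : 4*j+4 ≤ (hi 2).val := (hhiB 2).2
      have HM0 : (hi 0).val < (hi 1).val := by
        have := him (show (0 : Fin 3) < 1 by decide)
        rwa [Fin.lt_def] at this
      have HM1 : (hi 1).val < (hi 2).val := by
        have := him (show (1 : Fin 3) < 2 by decide)
        rwa [Fin.lt_def] at this
      set g : Fin 4 → Fin n := ![hi 0, p 1, hi 2, hi 1] with hgdef
      have hg0 : g 0 = hi 0 := rfl
      have hg1 : g 1 = p 1 := rfl
      have hg2 : g 2 = hi 2 := rfl
      have hg3 : g 3 = hi 1 := rfl
      have hpat : g 1 < g 0 ∧ g 0 < g 3 ∧ g 3 < g 2 := by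
        refine ⟨?_, ?_, ?_⟩ <;> simp only [hg0, hg1, hg2, hg3, Fin.lt_def] <;> omega
      have hmem : ∀ x, inA n j (g x) ∨ g x ∈ B := by
        intro x; fin_cases x
        · exact Or.inr (show g 0 ∈ B by rw [hg0]; exact (hhiB 0).1)
        · exact Or.inl (show inA n j (g 1) by rw [hg1]; exact hpinA 1)
        · exact Or.inr (show g 2 ∈ B by rw [hg2]; exact (hhiB 2).1)
        · exact Or.inr (show g 3 ∈ B by rw [hg3]; exact (hhiB 1).1)
      have hinv : ∀ x y, g x = p y → g y = p x := by
        intro x y hxy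
        fin_cases x
        · have hxy' : g (0 : Fin 4) = p y := hxy
          rw [hg0] at hxy'
          have hv := congrArg Fin.val hxy'
          have h1 := hpv y
          exfalso
          have h2 := y.isLt
          omega
        · have hxy' : g (1 : Fin 4) = p y := hxy
          rw [hg1] at hxy'
          have hv := congrArg Fin.val hxy'
          have h1 := hpv y
          have hy : y = 1 := by
            apply Fin.ext
            omega
          subst hy
          show g 1 = p (1 : Fin 4)
          exact hg1
        · have hxy' : g (2 : Fin 4) = p y := hxy
          rw [hg2] at hxy'
          have hv := congrArg Fin.val hxy'
          have h1 := hpv y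
          exfalso
          have h2 := y.isLt
          omega
        · have hxy' : g (3 : Fin 4) = p y := hxy
          rw [hg3] at hxy'
          have hv := congrArg Fin.val hxy'
          have h1 := hpv y
          exfalso
          have h2 := y.isLt
          omega
      have hsurj : ∀ b ∈ B, ∃ x, g x = b := by
        intro b hb
        rcases hsplit b hb with hbl | hbh
        · obtain ⟨i, hib⟩ := losurj b hbl
          exact i.elim0
        · obtain ⟨i, hib⟩ := hisurj b hbh
          rcases i with ⟨iv, hiv⟩
          interval_cases iv
          · exact ⟨0, by rw [hg0]; exact hib⟩
          · exact ⟨3, by rw [hg3]; exact hib⟩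
          · exact ⟨2, by rw [hg2]; exact hib⟩
      exact exists_patt_of_assignment hjk hw0 h4 g hpat hmem hinv hsurj (inj_of_chain hpat.1 hpat.2.1 hpat.2.2)
    · -- case l=0, h=4
      have W0 : 4*j+4 ≤ (hi 0).val := (hhiB 0).2
      have W1 : 4*j+4 ≤ (hi 1).val := (hhiB 1).2
      have W2 : 4*j+4 ≤ (hi 2).val := (hhiB 2).2
      have W3 : 4*j+4 ≤ (hi 3).val := (hhiB 3).2
      have HM0 : (hi 0).val < (hi 1).val := by
        have := him (show (0 : Fin 4) < 1 by decide)
        rwa [Fin.lt_def] at this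
      have HM1 : (hi 1).val < (hi 2).val := by
        have := him (show (1 : Fin 4) < 2 by decide)
        rwa [Fin.lt_def] at this
      have HM2 : (hi 2).val < (hi 3).val := by
        have := him (show (2 : Fin 4) < 3 by decide)
        rwa [Fin.lt_def] at this
      set g : Fin 4 → Fin n := ![hi 1, hi 0, hi 3, hi 2] with hgdef
      have hg0 : g 0 = hi 1 := rfl
      have hg1 : g 1 = hi 0 := rfl
      have hg2 : g 2 = hi 3 := rfl
      have hg3 : g 3 = hi 2 := rfl
      have hpat : g 1 < g 0 ∧ g 0 < g 3 ∧ g 3 < g 2 := by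
        refine ⟨?_, ?_, ?_⟩ <;> simp only [hg0, hg1, hg2, hg3, Fin.lt_def] <;> omega
      have hmem : ∀ x, inA n j (g x) ∨ g x ∈ B := by
        intro x; fin_cases x
        · exact Or.inr (show g 0 ∈ B by rw [hg0]; exact (hhiB 1).1)
        · exact Or.inr (show g 1 ∈ B by rw [hg1]; exact (hhiB 0).1)
        · exact Or.inr (show g 2 ∈ B by rw [hg2]; exact (hhiB 3).1)
        · exact Or.inr (show g 3 ∈ B by rw [hg3]; exact (hhiB 2).1)
      have hinv : ∀ x y, g x = p y → g y = p x := by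
        intro x y hxy
        fin_cases x
        · have hxy' : g (0 : Fin 4) = p y := hxy
          rw [hg0] at hxy'
          have hv := congrArg Fin.val hxy'
          have h1 := hpv y
          exfalso
          have h2 := y.isLt
          omega
        · have hxy' : g (1 : Fin 4) = p y := hxy
          rw [hg1] at hxy'
          have hv := congrArg Fin.val hxy'
          have h1 := hpv y
          exfalso
          have h2 := y.isLt
          omega
        · have hxy' : g (2 : Fin 4) = p y := hxy
          rw [hg2] at hxy'
          have hv := congrArg Fin.val hxy'
          have h1 := hpv y
          exfalso
          have h2 := y.isLt
          omega
        · have hxy' : g (3 : Fin 4) = p y := hxy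
          rw [hg3] at hxy'
          have hv := congrArg Fin.val hxy'
          have h1 := hpv y
          exfalso
          have h2 := y.isLt
          omega
      have hsurj : ∀ b ∈ B, ∃ x, g x = b := by
        intro b hb
        rcases hsplit b hb with hbl | hbh
        · obtain ⟨i, hib⟩ := losurj b hbl
          exact i.elim0
        · obtain ⟨i, hib⟩ := hisurj b hbh
          rcases i with ⟨iv, hiv⟩
          interval_cases iv
          · exact ⟨1, by rw [hg1]; exact hib⟩
          · exact ⟨0, by rw [hg0]; exact hib⟩
          · exact ⟨3, by rw [hg3]; exact hib⟩
          · exact ⟨2, by rw [hg2]; exact hib⟩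
      exact exists_patt_of_assignment hjk hw0 h4 g hpat hmem hinv hsurj (inj_of_chain hpat.1 hpat.2.1 hpat.2.2)
  · -- l = 1
    interval_cases h
    · -- case l=1, h=0
      have V0 : (lo 0).val < 4*j := (hloB 0).2
      set g : Fin 4 → Fin n := ![p 0, lo 0, p 3, p 2] with hgdef
      have hg0 : g 0 = p 0 := rfl
      have hg1 : g 1 = lo 0 := rfl
      have hg2 : g 2 = p 3 := rfl
      have hg3 : g 3 = p 2 := rfl
      have hpat : g 1 < g 0 ∧ g 0 < g 3 ∧ g 3 < g 2 := by
        refine ⟨?_, ?_, ?_⟩ <;> simp only [hg0, hg1, hg2, hg3, Fin.lt_def] <;> omega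
      have hmem : ∀ x, inA n j (g x) ∨ g x ∈ B := by
        intro x; fin_cases x
        · exact Or.inl (show inA n j (g 0) by rw [hg0]; exact hpinA 0)
        · exact Or.inr (show g 1 ∈ B by rw [hg1]; exact (hloB 0).1)
        · exact Or.inl (show inA n j (g 2) by rw [hg2]; exact hpinA 3)
        · exact Or.inl (show inA n j (g 3) by rw [hg3]; exact hpinA 2)
      have hinv : ∀ x y, g x = p y → g y = p x := by
        intro x y hxy
        fin_cases x
        · have hxy' : g (0 : Fin 4) = p y := hxy
          rw [hg0] at hxy'
          have hv := congrArg Fin.val hxy'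
          have h1 := hpv y
          have hy : y = 0 := by
            apply Fin.ext
            omega
          subst hy
          show g 0 = p (0 : Fin 4)
          exact hg0
        · have hxy' : g (1 : Fin 4) = p y := hxy
          rw [hg1] at hxy'
          have hv := congrArg Fin.val hxy'
          have h1 := hpv y
          exfalso
          have h2 := y.isLt
          omega
        · have hxy' : g (2 : Fin 4) = p y := hxy
          rw [hg2] at hxy'
          have hv := congrArg Fin.val hxy'
          have h1 := hpv y
          have hy : y = 3 := by
            apply Fin.ext
            omega
          subst hy
          show g 3 = p (2 : Fin 4)
          exact hg3
        · have hxy' : g (3 : Fin 4) = p y := hxy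
          rw [hg3] at hxy'
          have hv := congrArg Fin.val hxy'
          have h1 := hpv y
          have hy : y = 2 := by
            apply Fin.ext
            omega
          subst hy
          show g 2 = p (3 : Fin 4)
          exact hg2
      have hsurj : ∀ b ∈ B, ∃ x, g x = b := by
        intro b hb
        rcases hsplit b hb with hbl | hbh
        · obtain ⟨i, hib⟩ := losurj b hbl
          rcases i with ⟨iv, hiv⟩
          interval_cases iv
          · exact ⟨1, by rw [hg1]; exact hib⟩
        · obtain ⟨i, hib⟩ := hisurj b hbh
          exact i.elim0
      exact exists_patt_of_assignment hjk hw0 h4 g hpat hmem hinv hsurj (inj_of_chain hpat.1 hpat.2.1 hpat.2.2)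
    · -- case l=1, h=1
      have V0 : (lo 0).val < 4*j := (hloB 0).2
      have W0 : 4*j+4 ≤ (hi 0).val := (hhiB 0).2
      set g : Fin 4 → Fin n := ![p 0, lo 0, hi 0, p 3] with hgdef
      have hg0 : g 0 = p 0 := rfl
      have hg1 : g 1 = lo 0 := rfl
      have hg2 : g 2 = hi 0 := rfl
      have hg3 : g 3 = p 3 := rfl
      have hpat : g 1 < g 0 ∧ g 0 < g 3 ∧ g 3 < g 2 := by
        refine ⟨?_, ?_, ?_⟩ <;> simp only [hg0, hg1, hg2, hg3, Fin.lt_def] <;> omega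
      have hmem : ∀ x, inA n j (g x) ∨ g x ∈ B := by
        intro x; fin_cases x
        · exact Or.inl (show inA n j (g 0) by rw [hg0]; exact hpinA 0)
        · exact Or.inr (show g 1 ∈ B by rw [hg1]; exact (hloB 0).1)
        · exact Or.inr (show g 2 ∈ B by rw [hg2]; exact (hhiB 0).1)
        · exact Or.inl (show inA n j (g 3) by rw [hg3]; exact hpinA 3)
      have hinv : ∀ x y, g x = p y → g y = p x := by
        intro x y hxy
        fin_cases x
        · have hxy' : g (0 : Fin 4) = p y := hxy
          rw [hg0] at hxy'
          have hv := congrArg Fin.val hxy'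
          have h1 := hpv y
          have hy : y = 0 := by
            apply Fin.ext
            omega
          subst hy
          show g 0 = p (0 : Fin 4)
          exact hg0
        · have hxy' : g (1 : Fin 4) = p y := hxy
          rw [hg1] at hxy'
          have hv := congrArg Fin.val hxy'
          have h1 := hpv y
          exfalso
          have h2 := y.isLt
          omega
        · have hxy' : g (2 : Fin 4) = p y := hxy
          rw [hg2] at hxy'
          have hv := congrArg Fin.val hxy'
          have h1 := hpv y
          exfalso
          have h2 := y.isLt
          omega
        · have hxy' : g (3 : Fin 4) = p y := hxy
          rw [hg3] at hxy'
          have hv := congrArg Fin.val hxy'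
          have h1 := hpv y
          have hy : y = 3 := by
            apply Fin.ext
            omega
          subst hy
          show g 3 = p (3 : Fin 4)
          exact hg3
      have hsurj : ∀ b ∈ B, ∃ x, g x = b := by
        intro b hb
        rcases hsplit b hb with hbl | hbh
        · obtain ⟨i, hib⟩ := losurj b hbl
          rcases i with ⟨iv, hiv⟩
          interval_cases iv
          · exact ⟨1, by rw [hg1]; exact hib⟩
        · obtain ⟨i, hib⟩ := hisurj b hbh
          rcases i with ⟨iv, hiv⟩
          interval_cases iv
          · exact ⟨2, by rw [hg2]; exact hib⟩
      exact exists_patt_of_assignment hjk hw0 h4 g hpat hmem hinv hsurj (inj_of_chain hpat.1 hpat.2.1 hpat.2.2)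
    · -- case l=1, h=2
      have V0 : (lo 0).val < 4*j := (hloB 0).2
      have W0 : 4*j+4 ≤ (hi 0).val := (hhiB 0).2
      have W1 : 4*j+4 ≤ (hi 1).val := (hhiB 1).2
      have HM0 : (hi 0).val < (hi 1).val := by
        have := him (show (0 : Fin 2) < 1 by decide)
        rwa [Fin.lt_def] at this
      set g : Fin 4 → Fin n := ![p 0, lo 0, hi 1, hi 0] with hgdef
      have hg0 : g 0 = p 0 := rfl
      have hg1 : g 1 = lo 0 := rfl
      have hg2 : g 2 = hi 1 := rfl
      have hg3 : g 3 = hi 0 := rfl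
      have hpat : g 1 < g 0 ∧ g 0 < g 3 ∧ g 3 < g 2 := by
        refine ⟨?_, ?_, ?_⟩ <;> simp only [hg0, hg1, hg2, hg3, Fin.lt_def] <;> omega
      have hmem : ∀ x, inA n j (g x) ∨ g x ∈ B := by
        intro x; fin_cases x
        · exact Or.inl (show inA n j (g 0) by rw [hg0]; exact hpinA 0)
        · exact Or.inr (show g 1 ∈ B by rw [hg1]; exact (hloB 0).1)
        · exact Or.inr (show g 2 ∈ B by rw [hg2]; exact (hhiB 1).1)
        · exact Or.inr (show g 3 ∈ B by rw [hg3]; exact (hhiB 0).1)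
      have hinv : ∀ x y, g x = p y → g y = p x := by
        intro x y hxy
        fin_cases x
        · have hxy' : g (0 : Fin 4) = p y := hxy
          rw [hg0] at hxy'
          have hv := congrArg Fin.val hxy'
          have h1 := hpv y
          have hy : y = 0 := by
            apply Fin.ext
            omega
          subst hy
          show g 0 = p (0 : Fin 4)
          exact hg0
        · have hxy' : g (1 : Fin 4) = p y := hxy
          rw [hg1] at hxy'
          have hv := congrArg Fin.val hxy'
          have h1 := hpv y
          exfalso
          have h2 := y.isLt
          omega
        · have hxy' : g (2 : Fin 4) = p y := hxy
          rw [hg2] at hxy'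
          have hv := congrArg Fin.val hxy'
          have h1 := hpv y
          exfalso
          have h2 := y.isLt
          omega
        · have hxy' : g (3 : Fin 4) = p y := hxy
          rw [hg3] at hxy'
          have hv := congrArg Fin.val hxy'
          have h1 := hpv y
          exfalso
          have h2 := y.isLt
          omega
      have hsurj : ∀ b ∈ B, ∃ x, g x = b := by
        intro b hb
        rcases hsplit b hb with hbl | hbh
        · obtain ⟨i, hib⟩ := losurj b hbl
          rcases i with ⟨iv, hiv⟩
          interval_cases iv
          · exact ⟨1, by rw [hg1]; exact hib⟩
        · obtain ⟨i, hib⟩ := hisurj b hbh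
          rcases i with ⟨iv, hiv⟩
          interval_cases iv
          · exact ⟨3, by rw [hg3]; exact hib⟩
          · exact ⟨2, by rw [hg2]; exact hib⟩
      exact exists_patt_of_assignment hjk hw0 h4 g hpat hmem hinv hsurj (inj_of_chain hpat.1 hpat.2.1 hpat.2.2)
    · -- case l=1, h=3
      have V0 : (lo 0).val < 4*j := (hloB 0).2
      have W0 : 4*j+4 ≤ (hi 0).val := (hhiB 0).2
      have W1 : 4*j+4 ≤ (hi 1).val := (hhiB 1).2
      have W2 : 4*j+4 ≤ (hi 2).val := (hhiB 2).2
      have HM0 : (hi 0).val < (hi 1).val := by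
        have := him (show (0 : Fin 3) < 1 by decide)
        rwa [Fin.lt_def] at this
      have HM1 : (hi 1).val < (hi 2).val := by
        have := him (show (1 : Fin 3) < 2 by decide)
        rwa [Fin.lt_def] at this
      set g : Fin 4 → Fin n := ![hi 0, lo 0, hi 2, hi 1] with hgdef
      have hg0 : g 0 = hi 0 := rfl
      have hg1 : g 1 = lo 0 := rfl
      have hg2 : g 2 = hi 2 := rfl
      have hg3 : g 3 = hi 1 := rfl
      have hpat : g 1 < g 0 ∧ g 0 < g 3 ∧ g 3 < g 2 := by
        refine ⟨?_, ?_, ?_⟩ <;> simp only [hg0, hg1, hg2, hg3, Fin.lt_def] <;> omega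
      have hmem : ∀ x, inA n j (g x) ∨ g x ∈ B := by
        intro x; fin_cases x
        · exact Or.inr (show g 0 ∈ B by rw [hg0]; exact (hhiB 0).1)
        · exact Or.inr (show g 1 ∈ B by rw [hg1]; exact (hloB 0).1)
        · exact Or.inr (show g 2 ∈ B by rw [hg2]; exact (hhiB 2).1)
        · exact Or.inr (show g 3 ∈ B by rw [hg3]; exact (hhiB 1).1)
      have hinv : ∀ x y, g x = p y → g y = p x := by
        intro x y hxy
        fin_cases x
        · have hxy' : g (0 : Fin 4) = p y := hxy
          rw [hg0] at hxy'
          have hv := congrArg Fin.val hxy'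
          have h1 := hpv y
          exfalso
          have h2 := y.isLt
          omega
        · have hxy' : g (1 : Fin 4) = p y := hxy
          rw [hg1] at hxy'
          have hv := congrArg Fin.val hxy'
          have h1 := hpv y
          exfalso
          have h2 := y.isLt
          omega
        · have hxy' : g (2 : Fin 4) = p y := hxy
          rw [hg2] at hxy'
          have hv := congrArg Fin.val hxy'
          have h1 := hpv y
          exfalso
          have h2 := y.isLt
          omega
        · have hxy' : g (3 : Fin 4) = p y := hxy
          rw [hg3] at hxy'
          have hv := congrArg Fin.val hxy'
          have h1 := hpv y
          exfalso
          have h2 := y.isLt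
          omega
      have hsurj : ∀ b ∈ B, ∃ x, g x = b := by
        intro b hb
        rcases hsplit b hb with hbl | hbh
        · obtain ⟨i, hib⟩ := losurj b hbl
          rcases i with ⟨iv, hiv⟩
          interval_cases iv
          · exact ⟨1, by rw [hg1]; exact hib⟩
        · obtain ⟨i, hib⟩ := hisurj b hbh
          rcases i with ⟨iv, hiv⟩
          interval_cases iv
          · exact ⟨0, by rw [hg0]; exact hib⟩
          · exact ⟨3, by rw [hg3]; exact hib⟩
          · exact ⟨2, by rw [hg2]; exact hib⟩
      exact exists_patt_of_assignment hjk hw0 h4 g hpat hmem hinv hsurj (inj_of_chain hpat.1 hpat.2.1 hpat.2.2)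
    · exact absurd hlh4 (by omega)
  · -- l = 2
    interval_cases h
    · -- case l=2, h=0
      have V0 : (lo 0).val < 4*j := (hloB 0).2
      have V1 : (lo 1).val < 4*j := (hloB 1).2
      have LM0 : (lo 0).val < (lo 1).val := by
        have := lom (show (0 : Fin 2) < 1 by decide)
        rwa [Fin.lt_def] at this
      set g : Fin 4 → Fin n := ![lo 1, lo 0, p 3, p 2] with hgdef
      have hg0 : g 0 = lo 1 := rfl
      have hg1 : g 1 = lo 0 := rfl
      have hg2 : g 2 = p 3 := rfl
      have hg3 : g 3 = p 2 := rfl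
      have hpat : g 1 < g 0 ∧ g 0 < g 3 ∧ g 3 < g 2 := by
        refine ⟨?_, ?_, ?_⟩ <;> simp only [hg0, hg1, hg2, hg3, Fin.lt_def] <;> omega
      have hmem : ∀ x, inA n j (g x) ∨ g x ∈ B := by
        intro x; fin_cases x
        · exact Or.inr (show g 0 ∈ B by rw [hg0]; exact (hloB 1).1)
        · exact Or.inr (show g 1 ∈ B by rw [hg1]; exact (hloB 0).1)
        · exact Or.inl (show inA n j (g 2) by rw [hg2]; exact hpinA 3)
        · exact Or.inl (show inA n j (g 3) by rw [hg3]; exact hpinA 2)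
      have hinv : ∀ x y, g x = p y → g y = p x := by
        intro x y hxy
        fin_cases x
        · have hxy' : g (0 : Fin 4) = p y := hxy
          rw [hg0] at hxy'
          have hv := congrArg Fin.val hxy'
          have h1 := hpv y
          exfalso
          have h2 := y.isLt
          omega
        · have hxy' : g (1 : Fin 4) = p y := hxy
          rw [hg1] at hxy'
          have hv := congrArg Fin.val hxy'
          have h1 := hpv y
          exfalso
          have h2 := y.isLt
          omega
        · have hxy' : g (2 : Fin 4) = p y := hxy
          rw [hg2] at hxy'
          have hv := congrArg Fin.val hxy'
          have h1 := hpv y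
          have hy : y = 3 := by
            apply Fin.ext
            omega
          subst hy
          show g 3 = p (2 : Fin 4)
          exact hg3
        · have hxy' : g (3 : Fin 4) = p y := hxy
          rw [hg3] at hxy'
          have hv := congrArg Fin.val hxy'
          have h1 := hpv y
          have hy : y = 2 := by
            apply Fin.ext
            omega
          subst hy
          show g 2 = p (3 : Fin 4)
          exact hg2
      have hsurj : ∀ b ∈ B, ∃ x, g x = b := by
        intro b hb
        rcases hsplit b hb with hbl | hbh
        · obtain ⟨i, hib⟩ := losurj b hbl
          rcases i with ⟨iv, hiv⟩
          interval_cases iv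
          · exact ⟨1, by rw [hg1]; exact hib⟩
          · exact ⟨0, by rw [hg0]; exact hib⟩
        · obtain ⟨i, hib⟩ := hisurj b hbh
          exact i.elim0
      exact exists_patt_of_assignment hjk hw0 h4 g hpat hmem hinv hsurj (inj_of_chain hpat.1 hpat.2.1 hpat.2.2)
    · -- case l=2, h=1
      have V0 : (lo 0).val < 4*j := (hloB 0).2
      have V1 : (lo 1).val < 4*j := (hloB 1).2
      have W0 : 4*j+4 ≤ (hi 0).val := (hhiB 0).2
      have LM0 : (lo 0).val < (lo 1).val := by
        have := lom (show (0 : Fin 2) < 1 by decide)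
        rwa [Fin.lt_def] at this
      set g : Fin 4 → Fin n := ![lo 1, lo 0, hi 0, p 3] with hgdef
      have hg0 : g 0 = lo 1 := rfl
      have hg1 : g 1 = lo 0 := rfl
      have hg2 : g 2 = hi 0 := rfl
      have hg3 : g 3 = p 3 := rfl
      have hpat : g 1 < g 0 ∧ g 0 < g 3 ∧ g 3 < g 2 := by
        refine ⟨?_, ?_, ?_⟩ <;> simp only [hg0, hg1, hg2, hg3, Fin.lt_def] <;> omega
      have hmem : ∀ x, inA n j (g x) ∨ g x ∈ B := by
        intro x; fin_cases x
        · exact Or.inr (show g 0 ∈ B by rw [hg0]; exact (hloB 1).1)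
        · exact Or.inr (show g 1 ∈ B by rw [hg1]; exact (hloB 0).1)
        · exact Or.inr (show g 2 ∈ B by rw [hg2]; exact (hhiB 0).1)
        · exact Or.inl (show inA n j (g 3) by rw [hg3]; exact hpinA 3)
      have hinv : ∀ x y, g x = p y → g y = p x := by
        intro x y hxy
        fin_cases x
        · have hxy' : g (0 : Fin 4) = p y := hxy
          rw [hg0] at hxy'
          have hv := congrArg Fin.val hxy'
          have h1 := hpv y
          exfalso
          have h2 := y.isLt
          omega
        · have hxy' : g (1 : Fin 4) = p y := hxy
          rw [hg1] at hxy'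
          have hv := congrArg Fin.val hxy'
          have h1 := hpv y
          exfalso
          have h2 := y.isLt
          omega
        · have hxy' : g (2 : Fin 4) = p y := hxy
          rw [hg2] at hxy'
          have hv := congrArg Fin.val hxy'
          have h1 := hpv y
          exfalso
          have h2 := y.isLt
          omega
        · have hxy' : g (3 : Fin 4) = p y := hxy
          rw [hg3] at hxy'
          have hv := congrArg Fin.val hxy'
          have h1 := hpv y
          have hy : y = 3 := by
            apply Fin.ext
            omega
          subst hy
          show g 3 = p (3 : Fin 4)
          exact hg3
      have hsurj : ∀ b ∈ B, ∃ x, g x = b := by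
        intro b hb
        rcases hsplit b hb with hbl | hbh
        · obtain ⟨i, hib⟩ := losurj b hbl
          rcases i with ⟨iv, hiv⟩
          interval_cases iv
          · exact ⟨1, by rw [hg1]; exact hib⟩
          · exact ⟨0, by rw [hg0]; exact hib⟩
        · obtain ⟨i, hib⟩ := hisurj b hbh
          rcases i with ⟨iv, hiv⟩
          interval_cases iv
          · exact ⟨2, by rw [hg2]; exact hib⟩
      exact exists_patt_of_assignment hjk hw0 h4 g hpat hmem hinv hsurj (inj_of_chain hpat.1 hpat.2.1 hpat.2.2)
    · -- case l=2, h=2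
      have V0 : (lo 0).val < 4*j := (hloB 0).2
      have V1 : (lo 1).val < 4*j := (hloB 1).2
      have W0 : 4*j+4 ≤ (hi 0).val := (hhiB 0).2
      have W1 : 4*j+4 ≤ (hi 1).val := (hhiB 1).2
      have LM0 : (lo 0).val < (lo 1).val := by
        have := lom (show (0 : Fin 2) < 1 by decide)
        rwa [Fin.lt_def] at this
      have HM0 : (hi 0).val < (hi 1).val := by
        have := him (show (0 : Fin 2) < 1 by decide)
        rwa [Fin.lt_def] at this
      set g : Fin 4 → Fin n := ![lo 1, lo 0, hi 1, hi 0] with hgdef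
      have hg0 : g 0 = lo 1 := rfl
      have hg1 : g 1 = lo 0 := rfl
      have hg2 : g 2 = hi 1 := rfl
      have hg3 : g 3 = hi 0 := rfl
      have hpat : g 1 < g 0 ∧ g 0 < g 3 ∧ g 3 < g 2 := by
        refine ⟨?_, ?_, ?_⟩ <;> simp only [hg0, hg1, hg2, hg3, Fin.lt_def] <;> omega
      have hmem : ∀ x, inA n j (g x) ∨ g x ∈ B := by
        intro x; fin_cases x
        · exact Or.inr (show g 0 ∈ B by rw [hg0]; exact (hloB 1).1)
        · exact Or.inr (show g 1 ∈ B by rw [hg1]; exact (hloB 0).1)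
        · exact Or.inr (show g 2 ∈ B by rw [hg2]; exact (hhiB 1).1)
        · exact Or.inr (show g 3 ∈ B by rw [hg3]; exact (hhiB 0).1)
      have hinv : ∀ x y, g x = p y → g y = p x := by
        intro x y hxy
        fin_cases x
        · have hxy' : g (0 : Fin 4) = p y := hxy
          rw [hg0] at hxy'
          have hv := congrArg Fin.val hxy'
          have h1 := hpv y
          exfalso
          have h2 := y.isLt
          omega
        · have hxy' : g (1 : Fin 4) = p y := hxy
          rw [hg1] at hxy'
          have hv := congrArg Fin.val hxy'
          have h1 := hpv y
          exfalso
          have h2 := y.isLt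
          omega
        · have hxy' : g (2 : Fin 4) = p y := hxy
          rw [hg2] at hxy'
          have hv := congrArg Fin.val hxy'
          have h1 := hpv y
          exfalso
          have h2 := y.isLt
          omega
        · have hxy' : g (3 : Fin 4) = p y := hxy
          rw [hg3] at hxy'
          have hv := congrArg Fin.val hxy'
          have h1 := hpv y
          exfalso
          have h2 := y.isLt
          omega
      have hsurj : ∀ b ∈ B, ∃ x, g x = b := by
        intro b hb
        rcases hsplit b hb with hbl | hbh
        · obtain ⟨i, hib⟩ := losurj b hbl
          rcases i with ⟨iv, hiv⟩
          interval_cases iv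
          · exact ⟨1, by rw [hg1]; exact hib⟩
          · exact ⟨0, by rw [hg0]; exact hib⟩
        · obtain ⟨i, hib⟩ := hisurj b hbh
          rcases i with ⟨iv, hiv⟩
          interval_cases iv
          · exact ⟨3, by rw [hg3]; exact hib⟩
          · exact ⟨2, by rw [hg2]; exact hib⟩
      exact exists_patt_of_assignment hjk hw0 h4 g hpat hmem hinv hsurj (inj_of_chain hpat.1 hpat.2.1 hpat.2.2)
    · exact absurd hlh4 (by omega)
    · exact absurd hlh4 (by omega)
  · -- l = 3
    interval_cases h
    · -- case l=3, h=0
      have V0 : (lo 0).val < 4*j := (hloB 0).2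
      have V1 : (lo 1).val < 4*j := (hloB 1).2
      have V2 : (lo 2).val < 4*j := (hloB 2).2
      have LM0 : (lo 0).val < (lo 1).val := by
        have := lom (show (0 : Fin 3) < 1 by decide)
        rwa [Fin.lt_def] at this
      have LM1 : (lo 1).val < (lo 2).val := by
        have := lom (show (1 : Fin 3) < 2 by decide)
        rwa [Fin.lt_def] at this
      set g : Fin 4 → Fin n := ![lo 1, lo 0, p 2, lo 2] with hgdef
      have hg0 : g 0 = lo 1 := rfl
      have hg1 : g 1 = lo 0 := rfl
      have hg2 : g 2 = p 2 := rfl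
      have hg3 : g 3 = lo 2 := rfl
      have hpat : g 1 < g 0 ∧ g 0 < g 3 ∧ g 3 < g 2 := by
        refine ⟨?_, ?_, ?_⟩ <;> simp only [hg0, hg1, hg2, hg3, Fin.lt_def] <;> omega
      have hmem : ∀ x, inA n j (g x) ∨ g x ∈ B := by
        intro x; fin_cases x
        · exact Or.inr (show g 0 ∈ B by rw [hg0]; exact (hloB 1).1)
        · exact Or.inr (show g 1 ∈ B by rw [hg1]; exact (hloB 0).1)
        · exact Or.inl (show inA n j (g 2) by rw [hg2]; exact hpinA 2)
        · exact Or.inr (show g 3 ∈ B by rw [hg3]; exact (hloB 2).1)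
      have hinv : ∀ x y, g x = p y → g y = p x := by
        intro x y hxy
        fin_cases x
        · have hxy' : g (0 : Fin 4) = p y := hxy
          rw [hg0] at hxy'
          have hv := congrArg Fin.val hxy'
          have h1 := hpv y
          exfalso
          have h2 := y.isLt
          omega
        · have hxy' : g (1 : Fin 4) = p y := hxy
          rw [hg1] at hxy'
          have hv := congrArg Fin.val hxy'
          have h1 := hpv y
          exfalso
          have h2 := y.isLt
          omega
        · have hxy' : g (2 : Fin 4) = p y := hxy
          rw [hg2] at hxy'
          have hv := congrArg Fin.val hxy'
          have h1 := hpv y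
          have hy : y = 2 := by
            apply Fin.ext
            omega
          subst hy
          show g 2 = p (2 : Fin 4)
          exact hg2
        · have hxy' : g (3 : Fin 4) = p y := hxy
          rw [hg3] at hxy'
          have hv := congrArg Fin.val hxy'
          have h1 := hpv y
          exfalso
          have h2 := y.isLt
          omega
      have hsurj : ∀ b ∈ B, ∃ x, g x = b := by
        intro b hb
        rcases hsplit b hb with hbl | hbh
        · obtain ⟨i, hib⟩ := losurj b hbl
          rcases i with ⟨iv, hiv⟩
          interval_cases iv
          · exact ⟨1, by rw [hg1]; exact hib⟩
          · exact ⟨0, by rw [hg0]; exact hib⟩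
          · exact ⟨3, by rw [hg3]; exact hib⟩
        · obtain ⟨i, hib⟩ := hisurj b hbh
          exact i.elim0
      exact exists_patt_of_assignment hjk hw0 h4 g hpat hmem hinv hsurj (inj_of_chain hpat.1 hpat.2.1 hpat.2.2)
    · -- case l=3, h=1
      have V0 : (lo 0).val < 4*j := (hloB 0).2
      have V1 : (lo 1).val < 4*j := (hloB 1).2
      have V2 : (lo 2).val < 4*j := (hloB 2).2
      have W0 : 4*j+4 ≤ (hi 0).val := (hhiB 0).2
      have LM0 : (lo 0).val < (lo 1).val := by
        have := lom (show (0 : Fin 3) < 1 by decide)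
        rwa [Fin.lt_def] at this
      have LM1 : (lo 1).val < (lo 2).val := by
        have := lom (show (1 : Fin 3) < 2 by decide)
        rwa [Fin.lt_def] at this
      set g : Fin 4 → Fin n := ![lo 1, lo 0, hi 0, lo 2] with hgdef
      have hg0 : g 0 = lo 1 := rfl
      have hg1 : g 1 = lo 0 := rfl
      have hg2 : g 2 = hi 0 := rfl
      have hg3 : g 3 = lo 2 := rfl
      have hpat : g 1 < g 0 ∧ g 0 < g 3 ∧ g 3 < g 2 := by
        refine ⟨?_, ?_, ?_⟩ <;> simp only [hg0, hg1, hg2, hg3, Fin.lt_def] <;> omega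
      have hmem : ∀ x, inA n j (g x) ∨ g x ∈ B := by
        intro x; fin_cases x
        · exact Or.inr (show g 0 ∈ B by rw [hg0]; exact (hloB 1).1)
        · exact Or.inr (show g 1 ∈ B by rw [hg1]; exact (hloB 0).1)
        · exact Or.inr (show g 2 ∈ B by rw [hg2]; exact (hhiB 0).1)
        · exact Or.inr (show g 3 ∈ B by rw [hg3]; exact (hloB 2).1)
      have hinv : ∀ x y, g x = p y → g y = p x := by
        intro x y hxy
        fin_cases x
        · have hxy' : g (0 : Fin 4) = p y := hxy
          rw [hg0] at hxy'
          have hv := congrArg Fin.val hxy'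
          have h1 := hpv y
          exfalso
          have h2 := y.isLt
          omega
        · have hxy' : g (1 : Fin 4) = p y := hxy
          rw [hg1] at hxy'
          have hv := congrArg Fin.val hxy'
          have h1 := hpv y
          exfalso
          have h2 := y.isLt
          omega
        · have hxy' : g (2 : Fin 4) = p y := hxy
          rw [hg2] at hxy'
          have hv := congrArg Fin.val hxy'
          have h1 := hpv y
          exfalso
          have h2 := y.isLt
          omega
        · have hxy' : g (3 : Fin 4) = p y := hxy
          rw [hg3] at hxy'
          have hv := congrArg Fin.val hxy'
          have h1 := hpv y
          exfalso
          have h2 := y.isLt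
          omega
      have hsurj : ∀ b ∈ B, ∃ x, g x = b := by
        intro b hb
        rcases hsplit b hb with hbl | hbh
        · obtain ⟨i, hib⟩ := losurj b hbl
          rcases i with ⟨iv, hiv⟩
          interval_cases iv
          · exact ⟨1, by rw [hg1]; exact hib⟩
          · exact ⟨0, by rw [hg0]; exact hib⟩
          · exact ⟨3, by rw [hg3]; exact hib⟩
        · obtain ⟨i, hib⟩ := hisurj b hbh
          rcases i with ⟨iv, hiv⟩
          interval_cases iv
          · exact ⟨2, by rw [hg2]; exact hib⟩
      exact exists_patt_of_assignment hjk hw0 h4 g hpat hmem hinv hsurj (inj_of_chain hpat.1 hpat.2.1 hpat.2.2)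
    · exact absurd hlh4 (by omega)
    · exact absurd hlh4 (by omega)
    · exact absurd hlh4 (by omega)
  · -- l = 4
    interval_cases h
    · -- case l=4, h=0
      have V0 : (lo 0).val < 4*j := (hloB 0).2
      have V1 : (lo 1).val < 4*j := (hloB 1).2
      have V2 : (lo 2).val < 4*j := (hloB 2).2
      have V3 : (lo 3).val < 4*j := (hloB 3).2
      have LM0 : (lo 0).val < (lo 1).val := by
        have := lom (show (0 : Fin 4) < 1 by decide)
        rwa [Fin.lt_def] at this
      have LM1 : (lo 1).val < (lo 2).val := by
        have := lom (show (1 : Fin 4) < 2 by decide)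
        rwa [Fin.lt_def] at this
      have LM2 : (lo 2).val < (lo 3).val := by
        have := lom (show (2 : Fin 4) < 3 by decide)
        rwa [Fin.lt_def] at this
      set g : Fin 4 → Fin n := ![lo 1, lo 0, lo 3, lo 2] with hgdef
      have hg0 : g 0 = lo 1 := rfl
      have hg1 : g 1 = lo 0 := rfl
      have hg2 : g 2 = lo 3 := rfl
      have hg3 : g 3 = lo 2 := rfl
      have hpat : g 1 < g 0 ∧ g 0 < g 3 ∧ g 3 < g 2 := by
        refine ⟨?_, ?_, ?_⟩ <;> simp only [hg0, hg1, hg2, hg3, Fin.lt_def] <;> omega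
      have hmem : ∀ x, inA n j (g x) ∨ g x ∈ B := by
        intro x; fin_cases x
        · exact Or.inr (show g 0 ∈ B by rw [hg0]; exact (hloB 1).1)
        · exact Or.inr (show g 1 ∈ B by rw [hg1]; exact (hloB 0).1)
        · exact Or.inr (show g 2 ∈ B by rw [hg2]; exact (hloB 3).1)
        · exact Or.inr (show g 3 ∈ B by rw [hg3]; exact (hloB 2).1)
      have hinv : ∀ x y, g x = p y → g y = p x := by
        intro x y hxy
        fin_cases x
        · have hxy' : g (0 : Fin 4) = p y := hxy
          rw [hg0] at hxy'
          have hv := congrArg Fin.val hxy'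
          have h1 := hpv y
          exfalso
          have h2 := y.isLt
          omega
        · have hxy' : g (1 : Fin 4) = p y := hxy
          rw [hg1] at hxy'
          have hv := congrArg Fin.val hxy'
          have h1 := hpv y
          exfalso
          have h2 := y.isLt
          omega
        · have hxy' : g (2 : Fin 4) = p y := hxy
          rw [hg2] at hxy'
          have hv := congrArg Fin.val hxy'
          have h1 := hpv y
          exfalso
          have h2 := y.isLt
          omega
        · have hxy' : g (3 : Fin 4) = p y := hxy
          rw [hg3] at hxy'
          have hv := congrArg Fin.val hxy'
          have h1 := hpv y
          exfalso
          have h2 := y.isLt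
          omega
      have hsurj : ∀ b ∈ B, ∃ x, g x = b := by
        intro b hb
        rcases hsplit b hb with hbl | hbh
        · obtain ⟨i, hib⟩ := losurj b hbl
          rcases i with ⟨iv, hiv⟩
          interval_cases iv
          · exact ⟨1, by rw [hg1]; exact hib⟩
          · exact ⟨0, by rw [hg0]; exact hib⟩
          · exact ⟨3, by rw [hg3]; exact hib⟩
          · exact ⟨2, by rw [hg2]; exact hib⟩
        · obtain ⟨i, hib⟩ := hisurj b hbh
          exact i.elim0
      exact exists_patt_of_assignment hjk hw0 h4 g hpat hmem hinv hsurj (inj_of_chain hpat.1 hpat.2.1 hpat.2.2)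
    · exact absurd hlh4 (by omega)
    · exact absurd hlh4 (by omega)
    · exact absurd hlh4 (by omega)
    · exact absurd hlh4 (by omega)
open Classical in
noncomputable def Av (n k : ℕ) (j : ℕ) : Finset (Equiv.Perm (Fin n)) :=
  (Qset n k).filter (fun w => ∀ i < j, ¬ patt n i w)

lemma inA_mk {n i v : ℕ} (h : v < n) (h1 : 4*i ≤ v) (h2 : v < 4*i+4) :
    inA n i ⟨v, h⟩ := ⟨h1, h2⟩

lemma patt_congr {n : ℕ} {w w' : Equiv.Perm (Fin n)} {i : ℕ}
    (hagree : ∀ x : Fin n, inA n i x → w x = w' x) : patt n i w ↔ patt n i w' := by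
  constructor
  · rintro ⟨h, c1, c2, c3⟩
    refine ⟨h, ?_, ?_, ?_⟩
    · rw [← hagree ⟨4*i+1, by omega⟩ (inA_mk _ (by omega) (by omega)),
         ← hagree ⟨4*i, by omega⟩ (inA_mk _ (by omega) (by omega))]
      exact c1
    · rw [← hagree ⟨4*i, by omega⟩ (inA_mk _ (by omega) (by omega)),
         ← hagree ⟨4*i+3, by omega⟩ (inA_mk _ (by omega) (by omega))]
      exact c2
    · rw [← hagree ⟨4*i+3, by omega⟩ (inA_mk _ (by omega) (by omega)),
         ← hagree ⟨4*i+2, by omega⟩ (inA_mk _ (by omega) (by omega))]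
      exact c3
  · rintro ⟨h, c1, c2, c3⟩
    refine ⟨h, ?_, ?_, ?_⟩
    · rw [hagree ⟨4*i+1, by omega⟩ (inA_mk _ (by omega) (by omega)),
         hagree ⟨4*i, by omega⟩ (inA_mk _ (by omega) (by omega))]
      exact c1
    · rw [hagree ⟨4*i, by omega⟩ (inA_mk _ (by omega) (by omega)),
         hagree ⟨4*i+3, by omega⟩ (inA_mk _ (by omega) (by omega))]
      exact c2
    · rw [hagree ⟨4*i+3, by omega⟩ (inA_mk _ (by omega) (by omega)),
         hagree ⟨4*i+2, by omega⟩ (inA_mk _ (by omega) (by omega))]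
      exact c3

lemma agree_on_other_block {n k j i : ℕ} {w w0 : Equiv.Perm (Fin n)}
    (hw : w ∈ Qset n k) (hw0 : w0 ∈ Qset n k) (hd : dmap j w = dmap j w0)
    (hik : i < k) (hjk : j < k) (hij : i ≠ j) {x : Fin n} (hx : inA n i x) :
    w x = w0 x := by
  have h1 : ¬ inA n j x := by
    intro hc
    obtain ⟨a1, a2⟩ := hx
    obtain ⟨b1, b2⟩ := hc
    exact hij (by omega)
  have h2 : ¬ inA n j (w0 x) := Qset_block hw0 hik hjk hij hx
  exact fiber_agree hd h1 h2

open Classical in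
lemma step_lemma {n k j : ℕ} (hjk : j < k) (hn : 4*k ≤ n) :
    24 * (Av n k (j+1)).card ≤ 23 * (Av n k j).card := by
  classical
  set Q := Qset n k with hQdef
  set D := dmap (n := n) j with hDdef
  set T := (Av n k j).image D with hTdef
  have hsub : ∀ w ∈ Av n k (j+1), w ∈ Av n k j := by
    intro w hw
    rw [Av, Finset.mem_filter] at hw ⊢
    exact ⟨hw.1, fun i hi => hw.2 i (by omega)⟩
  have hmap1 : ∀ w ∈ Av n k (j+1), D w ∈ T := by
    intro w hw
    exact Finset.mem_image_of_mem D (hsub w hw)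
  have hmap2 : ∀ w ∈ Av n k j, D w ∈ T := fun w hw => Finset.mem_image_of_mem D hw
  rw [Finset.card_eq_sum_card_fiberwise hmap1, Finset.card_eq_sum_card_fiberwise hmap2,
    Finset.mul_sum, Finset.mul_sum]
  apply Finset.sum_le_sum
  intro t ht
  obtain ⟨w0, hw0Av, hw0t⟩ := Finset.mem_image.1 ht
  have hw0Q : w0 ∈ Q := (Finset.mem_filter.1 hw0Av).1
  have hw0av : ∀ i < j, ¬ patt n i w0 := (Finset.mem_filter.1 hw0Av).2
  -- the Q-fiber
  set FQ := Q.filter (fun w => D w = t) with hFQdef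
  have hFQav : ∀ w ∈ FQ, ∀ i < j, ¬ patt n i w := by
    intro w hw i hi
    have hwQ := (Finset.mem_filter.1 hw).1
    have hwt : D w = t := (Finset.mem_filter.1 hw).2
    have hdd : dmap j w = dmap j w0 := by rw [← hDdef, hwt, ← hw0t, hDdef]
    rw [patt_congr (fun x hx =>
      agree_on_other_block hwQ hw0Q hdd (by omega) hjk (by omega) hx)]
    exact hw0av i hi
  have hFeq : (Av n k j).filter (fun w => D w = t) = FQ := by
    ext w
    simp only [Av, hFQdef, Finset.mem_filter, and_assoc]
    constructor
    · rintro ⟨h1, _, h3⟩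
      exact ⟨h1, h3⟩
    · rintro ⟨h1, h3⟩
      exact ⟨h1, hFQav w (Finset.mem_filter.2 ⟨h1, h3⟩), h3⟩
  have hF'eq : (Av n k (j+1)).filter (fun w => D w = t) =
      FQ.filter (fun w => ¬ patt n j w) := by
    ext w
    simp only [Av, hFQdef, Finset.mem_filter, and_assoc]
    constructor
    · rintro ⟨h1, h2, h3⟩
      exact ⟨h1, h3, h2 j (by omega)⟩
    · rintro ⟨h1, h3, h4⟩
      refine ⟨h1, ?_, h3⟩
      intro i hi
      by_cases hij : i = j
      · subst hij; exact h4
      · exact hFQav w (Finset.mem_filter.2 ⟨h1, h3⟩) i (by omega)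
  -- pattern element
  obtain ⟨ws, hwsQ, hwsd, hwspatt⟩ := exists_patt_fiber hjk hn hw0Q
  have hwsFQ : ws ∈ FQ := by
    rw [hFQdef, Finset.mem_filter]
    exact ⟨hwsQ, by rw [hDdef] at hw0t ⊢; rw [hwsd, hw0t]⟩
  have hteq : t = dmap j w0 := by rw [← hw0t]
  have hFQ2 : FQ = (Qset n k).filter (fun w => dmap j w = dmap j w0) := by
    rw [hFQdef, hteq, hDdef, hQdef]
  have hcard24 : FQ.card ≤ 24 := by
    rw [hFQ2]
    exact fiber_card_le hjk hn hw0Q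
  have hsubset : FQ.filter (fun w => ¬ patt n j w) ⊆ FQ.erase ws := by
    intro w hw
    rw [Finset.mem_filter] at hw
    rw [Finset.mem_erase]
    refine ⟨?_, hw.1⟩
    intro hc
    subst hc
    exact hw.2 hwspatt
  have hlt : (FQ.filter (fun w => ¬ patt n j w)).card + 1 ≤ FQ.card := by
    have h1 := Finset.card_le_card hsubset
    have h2 : (FQ.erase ws).card = FQ.card - 1 := Finset.card_erase_of_mem hwsFQ
    have h3 : 1 ≤ FQ.card := Finset.card_pos.2 ⟨ws, hwsFQ⟩
    omega
  rw [hFeq, hF'eq]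
  omega

open Classical in
lemma iter_lemma {n k : ℕ} (hn : 4*k ≤ n) :
    ∀ j ≤ k, 24^j * (Av n k j).card ≤ 23^j * (Qset n k).card := by
  intro j
  induction j with
  | zero =>
    intro _
    have h0 : Av n k 0 = Qset n k := by
      apply Finset.filter_true_of_mem
      intro w _ i hi
      omega
    simp [h0]
  | succ j ih =>
    intro hjk
    have h1 := step_lemma (n := n) (k := k) (j := j) (by omega) hn
    have h2 := ih (by omega)
    calc 24^(j+1) * (Av n k (j+1)).card = 24^j * (24 * (Av n k (j+1)).card) := by ring
      _ ≤ 24^j * (23 * (Av n k j).card) := Nat.mul_le_mul_left _ h1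
      _ = 23 * (24^j * (Av n k j).card) := by ring
      _ ≤ 23 * (23^j * (Qset n k).card) := Nat.mul_le_mul_left _ h2
      _ = 23^(j+1) * (Qset n k).card := by ring
/-- For `k ≥ 1` and `n ≥ 4k`, the number of `w ∈ Q_{n,k}` such that for
every block index `i` (0-based, `i < k`) the chain
`w(4i-2) < w(4i-3) < w(4i) < w(4i-1)` (0-based: `w(4i+1) < w(4i) < w(4i+3) < w(4i+2)`)
fails, is at most `(23/24)^k * |Q_{n,k}|`. -/
theorem stmt9 (k n : ℕ) (hk : 1 ≤ k) (hn : 4 * k ≤ n) :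
    ((((Qset n k)).filter fun w =>
      ∀ i, ∀ hi : i < k,
        ¬ (w ⟨4 * i + 1, by omega⟩ < w ⟨4 * i, by omega⟩ ∧
           w ⟨4 * i, by omega⟩ < w ⟨4 * i + 3, by omega⟩ ∧
           w ⟨4 * i + 3, by omega⟩ < w ⟨4 * i + 2, by omega⟩)).card : ℝ)
    ≤ (23 / 24 : ℝ) ^ k * ((Qset n k).card : ℝ) := by
  classical
  have hiter := iter_lemma (n := n) (k := k) hn k le_rfl
  have hset : (((Qset n k)).filter fun w =>
      ∀ i, ∀ hi : i < k,
        ¬ (w ⟨4 * i + 1, by omega⟩ < w ⟨4 * i, by omega⟩ ∧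
           w ⟨4 * i, by omega⟩ < w ⟨4 * i + 3, by omega⟩ ∧
           w ⟨4 * i + 3, by omega⟩ < w ⟨4 * i + 2, by omega⟩)) = Av n k k := by
    rw [Av]
    apply Finset.filter_congr
    intro w _
    constructor
    · intro hw i hik
      rintro ⟨h, c1, c2, c3⟩
      exact hw i hik ⟨c1, c2, c3⟩
    · intro hw i hik hc
      exact hw i hik ⟨by omega, hc.1, hc.2.1, hc.2.2⟩
  rw [hset]
  have h24 : (0:ℝ) < (24:ℝ)^k := by positivity
  rw [div_pow, div_mul_eq_mul_div, le_div_iff₀ h24]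
  calc ((Av n k k).card : ℝ) * 24^k = ((24^k * (Av n k k).card : ℕ) : ℝ) := by
        push_cast; ring
    _ ≤ ((23^k * (Qset n k).card : ℕ) : ℝ) := by exact_mod_cast hiter
    _ = 23^k * ((Qset n k).card : ℝ) := by push_cast; ring
end
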